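/- arXiv:2408.09466 — 7 statements merged into one kernel-verified Lean document; each statement's English description precedes it below -/
import Mathlib

section
/- Let F be a field, X a finite set, and A a finite multiset of nonempty subsets of X such that every element x ∈ X belongs to exactly k members of A (counted with multiplicity). Then for every linear subspace L ⊆ F^X, dim(L) ≤ (1/k) · Σ_{A∈A} dim(L_A), where L_A is the coordinate projection of L onto F^A. -/
open Module

/-- The coordinate projection of a subspace `L ⊆ F^X` onto the coordinates of a finite set `A`. -/
noncomputable def coordProj (F : Type*) [Field F] {X : Type*} (L : Submodule F (X → F))
    (A : Finset X) : Submodule F ({x // x ∈ A} → F) :=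
  L.map (LinearMap.funLeft F F (Subtype.val : {x // x ∈ A} → X))

section Aux

variable (F : Type*) [Field F] {X : Type*} [Fintype X] [DecidableEq X] (L : Submodule F (X → F))

/-- The coordinate evaluation functionals on `L`. -/
noncomputable def evX (x : X) : Module.Dual F L := (LinearMap.proj x).comp L.subtype

omit [DecidableEq X] in
lemma span_evX : Submodule.span F (Set.range (evX F L)) = ⊤ := by
  by_contra h
  obtain ⟨ψ, hψ0, hker⟩ :=
    Submodule.exists_le_ker_of_lt_top _ (lt_top_iff_ne_top.mpr h)
  obtain ⟨v, rfl⟩ := (Module.evalEquiv F L).surjective ψ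
  have hv : ∀ x : X, (v : X → F) x = 0 := by
    intro x
    have := hker (Submodule.subset_span ⟨x, rfl⟩)
    simpa [Module.evalEquiv_apply, evX] using this
  have : v = 0 := Subtype.ext (funext hv)
  subst this
  exact hψ0 (by simp)

omit [Fintype X] [DecidableEq X] in
lemma coordProj_mono {T A : Finset X} (h : T ⊆ A) :
    coordProj F L T = (coordProj F L A).map
      (LinearMap.funLeft F F (fun x : {x // x ∈ T} => (⟨x.1, h x.2⟩ : {x // x ∈ A}))) := by
  have h1 : LinearMap.funLeft F F (Subtype.val : {x // x ∈ T} → X) =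
      (LinearMap.funLeft F F (fun x : {x // x ∈ T} => (⟨x.1, h x.2⟩ : {x // x ∈ A}))) ∘ₗ
        (LinearMap.funLeft F F (Subtype.val : {x // x ∈ A} → X)) :=
    LinearMap.funLeft_comp F F _ _
  unfold coordProj
  rw [h1, Submodule.map_comp]

omit [Fintype X] [DecidableEq X] in
lemma coordProj_top_of_subset {T S : Finset X} (h : T ⊆ S) (hS : coordProj F L S = ⊤) :
    coordProj F L T = ⊤ := by
  rw [coordProj_mono F L h, hS, Submodule.map_top, LinearMap.range_eq_top]
  exact LinearMap.funLeft_surjective_of_injective F F _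
    (fun x y hxy => Subtype.ext (congrArg (Subtype.val : {x // x ∈ S} → X) hxy))

lemma exists_good : ∃ S : Finset X, S.card = finrank F L ∧ coordProj F L S = ⊤ := by
  obtain ⟨t, hts, hspan, hli⟩ := exists_linearIndependent F (Set.range (evX F L))
  rw [span_evX] at hspan
  have htfin : t.Finite := (Set.finite_range _).subset hts
  haveI := htfin.fintype
  let b : Basis t F (Module.Dual F L) :=
    Basis.mk hli (by rw [Subtype.range_coe]; exact hspan.ge)
  have hcard : Fintype.card t = finrank F L := by
    rw [← finrank_eq_card_basis b, Subspace.dual_finrank_eq]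
  have pick : ∀ φ : t, ∃ x : X, evX F L x = (φ : Module.Dual F L) := fun φ => hts φ.2
  choose g hg using pick
  have hginj : Function.Injective g := fun φ ψ h => by
    apply Subtype.ext; rw [← hg φ, ← hg ψ, h]
  refine ⟨Finset.univ.image g, ?_, ?_⟩
  · rw [Finset.card_image_of_injective _ hginj, Finset.card_univ, hcard]
  set S : Finset X := Finset.univ.image g with hSdef
  have key : ∀ s : {x // x ∈ S}, ∃ φ : t, g φ = s.1 ∧ (φ : Module.Dual F L) = evX F L s.1 := by
    rintro ⟨x, hx⟩
    obtain ⟨φ, -, hφ⟩ := Finset.mem_image.mp hx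
    exact ⟨φ, hφ, by subst hφ; exact (hg φ).symm⟩
  have hmem : ∀ s : {x // x ∈ S}, evX F L s.1 ∈ t := fun s => by
    obtain ⟨φ, -, h2⟩ := key s; rw [← h2]; exact φ.2
  set f : {x // x ∈ S} → t := fun s => ⟨evX F L s.1, hmem s⟩ with hfdef
  have hfinj : Function.Injective f := by
    intro s1 s2 h
    obtain ⟨φ1, hg1, hφ1⟩ := key s1
    obtain ⟨φ2, hg2, hφ2⟩ := key s2
    have : φ1 = φ2 := Subtype.ext (by
      rw [hφ1, hφ2]
      exact congrArg Subtype.val h)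
    exact Subtype.ext (by rw [← hg1, ← hg2, this])
  have he : LinearIndependent F (fun s : {x // x ∈ S} => evX F L s.1) := hli.comp f hfinj
  by_contra hS
  obtain ⟨c, hc0, hker⟩ :=
    Submodule.exists_le_ker_of_lt_top _ (lt_top_iff_ne_top.mpr hS)
  have hc : ∀ u : {x // x ∈ S} → F, c u = ∑ s : {x // x ∈ S}, u s * c (Pi.single s 1) := by
    intro u
    conv_lhs => rw [← Finset.univ_sum_single u]
    rw [map_sum]
    refine Finset.sum_congr rfl fun s _ => ?_
    have : Pi.single s (u s) = u s • (Pi.single s 1 : {x // x ∈ S} → F) := by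
      rw [← Pi.single_smul, smul_eq_mul, mul_one]
    rw [this, map_smul, smul_eq_mul]
  have hsum : ∑ s : {x // x ∈ S}, c (Pi.single s 1) • evX F L s.1 = 0 := by
    apply LinearMap.ext
    intro v
    have hv : (fun s : {x // x ∈ S} => (v : X → F) s.1) ∈ coordProj F L S :=
      ⟨(v : X → F), v.2, rfl⟩
    have h0 : c (fun s : {x // x ∈ S} => (v : X → F) s.1) = 0 := hker hv
    rw [hc] at h0
    have : (∑ s : {x // x ∈ S}, c (Pi.single s 1) • evX F L s.1) v
        = ∑ s : {x // x ∈ S}, c (Pi.single s 1) * (v : X → F) s.1 := by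
      simp [evX, LinearMap.sum_apply]
    rw [this]
    simpa [mul_comm] using h0
  have hcoef : ∀ s : {x // x ∈ S}, c (Pi.single s 1) = 0 :=
    Fintype.linearIndependent_iff.mp he _ hsum
  apply hc0
  apply LinearMap.ext
  intro u
  rw [hc]
  simp [hcoef]

end Aux

lemma double_count {X : Type*} [DecidableEq X] (S : Finset X) (𝒜 : Multiset (Finset X)) :
    (𝒜.map (fun A => (A ∩ S).card)).sum = ∑ x ∈ S, 𝒜.countP (fun A => x ∈ A) := by
  induction 𝒜 using Multiset.induction with
  | empty => simp
  | cons A 𝒜 ih =>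
    simp only [Multiset.map_cons, Multiset.sum_cons, Multiset.countP_cons,
      Finset.sum_add_distrib, ih]
    rw [add_comm]
    congr 1
    rw [Finset.inter_comm, ← Finset.filter_mem_eq_inter, Finset.card_filter]

/-- Shearer-type lemma for subspaces: if `𝒜` is an exact `k`-cover of `X` by nonempty sets,
then `dim(L) ≤ (1/k) Σ_{A ∈ 𝒜} dim(L_A)`, stated multiplied through by `k`. -/
theorem finrank_le_of_exact_cover (F : Type*) [Field F] (X : Type*) [Fintype X] [DecidableEq X]
    (k : ℕ) (𝒜 : Multiset (Finset X))
    (hne : ∀ A ∈ 𝒜, A.Nonempty)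
    (hcov : ∀ x : X, 𝒜.countP (fun A => x ∈ A) = k)
    (L : Submodule F (X → F)) :
    k * finrank F L ≤ (𝒜.map (fun A => finrank F (coordProj F L A))).sum := by
  obtain ⟨S, hScard, hStop⟩ := exists_good F L
  have key : ∀ A : Finset X, (A ∩ S).card ≤ finrank F (coordProj F L A) := by
    intro A
    have hTtop : coordProj F L (A ∩ S) = ⊤ :=
      coordProj_top_of_subset F L Finset.inter_subset_right hStop
    have hTcard : finrank F (coordProj F L (A ∩ S)) = (A ∩ S).card := by
      rw [hTtop, finrank_top, Module.finrank_fintype_fun_eq_card, Fintype.card_coe]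
    rw [← hTcard, coordProj_mono F L (Finset.inter_subset_left : A ∩ S ⊆ A)]
    exact Submodule.finrank_map_le _ _
  calc k * finrank F L = ∑ x ∈ S, 𝒜.countP (fun A => x ∈ A) := by
        simp only [hcov, Finset.sum_const, smul_eq_mul, hScard, mul_comm]
    _ = (𝒜.map (fun A => (A ∩ S).card)).sum := (double_count S 𝒜).symm
    _ ≤ (𝒜.map (fun A => finrank F (coordProj F L A))).sum :=
        Multiset.sum_map_le_sum_map _ _ (fun A _ => key A)
end

section
/- Let N be a matroid of rank r on a finite set E with rank function r_N. Define ν_N : C(E,r) → ℝ by ν_N(X) := r − r_N(X). Then ν_N is a valuation of the uniform matroid U(r,E); that is, for all r-subsets X, Y of E and all e ∈ X\Y there exists f ∈ Y\X with ν_N(X) + ν_N(Y) ≥ ν_N(X−e+f) + ν_N(Y+e−f). -/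
open Finset

/-- If `x` depends on `A` (adding it does not raise the rank), then it depends on
any superset `B` of `A`. -/
private lemma rk_depmono {α : Type*} [DecidableEq α] (E : Finset α) (rN : Finset α → ℕ)
    (hsub : ∀ A B : Finset α, A ⊆ E → B ⊆ E → rN (A ∪ B) + rN (A ∩ B) ≤ rN A + rN B)
    {A B : Finset α} {x : α} (hAB : A ⊆ B) (hB : B ⊆ E) (hx : x ∈ E)
    (h : rN (insert x A) ≤ rN A) : rN (insert x B) ≤ rN B := by
  by_cases hxB : x ∈ B
  · rw [Finset.insert_eq_self.mpr hxB]
  · have h1 : B ∪ insert x A = insert x B := by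
      rw [Finset.union_insert, Finset.union_eq_left.mpr hAB]
    have h2 : B ∩ insert x A = A := by
      ext a
      simp only [Finset.mem_inter, Finset.mem_insert]
      constructor
      · rintro ⟨haB, rfl | haA⟩
        · exact absurd haB hxB
        · exact haA
      · intro haA
        exact ⟨hAB haA, Or.inr haA⟩
    have h3 := hsub B (insert x A) hB (Finset.insert_subset hx (hAB.trans hB))
    rw [h1, h2] at h3
    omega

/-- Rank grows by at most the number of added elements. -/
private lemma rk_union_le {α : Type*} [DecidableEq α] (E : Finset α) (rN : Finset α → ℕ)
    (hunit : ∀ A : Finset α, A ⊆ E → ∀ e ∈ E, rN (insert e A) ≤ rN A + 1) :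
    ∀ (T S : Finset α), S ⊆ E → T ⊆ E → rN (S ∪ T) ≤ rN S + T.card := by
  intro T
  induction T using Finset.induction_on with
  | empty => intro S hS _; simp
  | @insert a T haT ih =>
    intro S hS hT
    have haE : a ∈ E := hT (Finset.mem_insert_self a T)
    have hTE : T ⊆ E := (Finset.subset_insert a T).trans hT
    rw [Finset.union_insert, Finset.card_insert_of_notMem haT]
    calc rN (insert a (S ∪ T)) ≤ rN (S ∪ T) + 1 :=
        hunit _ (Finset.union_subset hS hTE) a haE
      _ ≤ rN S + T.card + 1 := by have := ih S hS hTE; omega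

/-- If every element of `S` depends on `A`, then `A ∪ S` has the same rank as `A`. -/
private lemma rk_span {α : Type*} [DecidableEq α] (E : Finset α) (rN : Finset α → ℕ)
    (hsub : ∀ A B : Finset α, A ⊆ E → B ⊆ E → rN (A ∪ B) + rN (A ∩ B) ≤ rN A + rN B) :
    ∀ (S A : Finset α), A ⊆ E → S ⊆ E → (∀ f ∈ S, rN (insert f A) ≤ rN A) →
      rN (A ∪ S) ≤ rN A := by
  intro S
  induction S using Finset.induction_on with
  | empty => intro A _ _ _; simp
  | @insert a T haT ih =>
    intro A hA hS hdep
    have haE : a ∈ E := hS (Finset.mem_insert_self a T)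
    have hTE : T ⊆ E := (Finset.subset_insert a T).trans hS
    have hAT : rN (A ∪ T) ≤ rN A := ih A hA hTE (fun f hf => hdep f (Finset.mem_insert_of_mem hf))
    have h1 : rN (insert a (A ∪ T)) ≤ rN (A ∪ T) :=
      rk_depmono E rN hsub Finset.subset_union_left (Finset.union_subset hA hTE) haE
        (hdep a (Finset.mem_insert_self a T))
    rw [Finset.union_insert]
    omega

/-- Removing a set of "coloops" drops the rank by its cardinality. -/
private lemma rk_coloop {α : Type*} [DecidableEq α] (E : Finset α) (rN : Finset α → ℕ)
    (hsub : ∀ A B : Finset α, A ⊆ E → B ⊆ E → rN (A ∪ B) + rN (A ∩ B) ≤ rN A + rN B)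
    (Z : Finset α) (hZ : Z ⊆ E) :
    ∀ (D : Finset α), D ⊆ Z → (∀ f ∈ D, rN (Z.erase f) + 1 ≤ rN Z) →
      rN (Z \ D) + D.card ≤ rN Z := by
  intro D
  induction D using Finset.induction_on with
  | empty => intro _ _; simp
  | @insert f S hfS ih =>
    intro hDZ hco
    have hfZ : f ∈ Z := hDZ (Finset.mem_insert_self f S)
    have hSZ : S ⊆ Z := (Finset.subset_insert f S).trans hDZ
    have hIH := ih hSZ (fun g hg => hco g (Finset.mem_insert_of_mem hg))
    have hu : (Z \ S) ∪ (Z.erase f) = Z := by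
      ext a
      simp only [Finset.mem_union, Finset.mem_sdiff, Finset.mem_erase]
      constructor
      · rintro (⟨h, _⟩ | ⟨_, h⟩) <;> exact h
      · intro haZ
        by_cases haf : a = f
        · subst haf; exact Or.inl ⟨haZ, hfS⟩
        · exact Or.inr ⟨haf, haZ⟩
    have hi : (Z \ S) ∩ (Z.erase f) = Z \ insert f S := by
      ext a
      simp only [Finset.mem_inter, Finset.mem_sdiff, Finset.mem_erase, Finset.mem_insert]
      tauto
    have h3 := hsub (Z \ S) (Z.erase f) ((Finset.sdiff_subset).trans hZ)
      ((Finset.erase_subset f Z).trans hZ)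
    rw [hu, hi] at h3
    have hcf := hco f (Finset.mem_insert_self f S)
    rw [Finset.card_insert_of_notMem hfS]
    omega

/-- The hard counting case: both exchange failures for every `f` lead to a contradiction. -/
private lemma rk_caseB {α : Type*} [DecidableEq α] (E : Finset α) (rN : Finset α → ℕ)
    (hmono : ∀ A B : Finset α, A ⊆ B → B ⊆ E → rN A ≤ rN B)
    (hunit : ∀ A : Finset α, A ⊆ E → ∀ e ∈ E, rN (insert e A) ≤ rN A + 1)
    (hsub : ∀ A B : Finset α, A ⊆ E → B ⊆ E → rN (A ∪ B) + rN (A ∩ B) ≤ rN A + rN B)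
    (X Y : Finset α) (e : α) (hXE : X ⊆ E) (hYE : Y ⊆ E) (heX : e ∈ X) (heY : e ∉ Y)
    (hcard : (X.erase e \ (Y ∩ X)).card + 1 = (Y \ X).card)
    (hZY' : rN (insert e Y) + rN (X.erase e) = rN X + rN Y)
    (hkey : rN (Y ∩ X) + rN (insert e Y) ≤ rN (insert e (Y ∩ X)) + rN Y) :
    ∃ f ∈ Y \ X, rN X + rN Y ≤ rN (insert f (X.erase e)) + rN (insert e (Y.erase f)) := by
  by_contra hcon
  push_neg at hcon
  set A := X.erase e with hA
  set Z := insert e Y with hZ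
  set D := Y \ X with hD
  set I := Y ∩ X with hI
  have hAX : A ⊆ X := Finset.erase_subset e X
  have hAE : A ⊆ E := hAX.trans hXE
  have heE : e ∈ E := hXE heX
  have hZE : Z ⊆ E := Finset.insert_subset heE hYE
  have hYZ : Y ⊆ Z := Finset.subset_insert e Y
  have hDY : D ⊆ Y := Finset.sdiff_subset
  have hDZ : D ⊆ Z := hDY.trans hYZ
  have hDE : D ⊆ E := hDY.trans hYE
  have hIA : I ⊆ A := by
    intro a ha
    rw [hI, Finset.mem_inter] at ha
    exact Finset.mem_erase.mpr ⟨fun h => heY (h ▸ ha.1), ha.2⟩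
  have hIE : I ⊆ E := hIA.trans hAE
  -- every f in D fails both exchanges
  have hfail : ∀ f ∈ D, rN (insert f A) ≤ rN A ∧ rN (Z.erase f) + 1 ≤ rN Z := by
    intro f hfD
    have hfY : f ∈ Y := hDY hfD
    have hfe : f ≠ e := fun h => heY (h ▸ hfY)
    have hfE : f ∈ E := hYE hfY
    have hfZ : f ∈ Z := hYZ hfY
    have hins : insert e (Y.erase f) = Z.erase f := by
      rw [hZ, Finset.erase_insert_of_ne hfe.symm]
    have hcf := hcon f hfD
    rw [hins] at hcf
    have hdrop : rN Z ≤ rN (Z.erase f) + 1 := by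
      have h1 : insert f (Z.erase f) = Z := Finset.insert_erase hfZ
      calc rN Z = rN (insert f (Z.erase f)) := by rw [h1]
        _ ≤ rN (Z.erase f) + 1 :=
          hunit _ ((Finset.erase_subset f Z).trans hZE) f hfE
    have hupA : rN A ≤ rN (insert f A) :=
      hmono A (insert f A) (Finset.subset_insert f A) (Finset.insert_subset hfE hAE)
    have hZem : rN (Z.erase f) ≤ rN Z :=
      hmono _ _ (Finset.erase_subset f Z) hZE
    constructor
    · by_contra hna; push_neg at hna; omega
    · by_contra hnb; push_neg at hnb; omega
  have hco : rN (Z \ D) + D.card ≤ rN Z :=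
    rk_coloop E rN hsub Z hZE D hDZ (fun f hf => (hfail f hf).2)
  have hZD : Z \ D = insert e I := by
    ext a
    simp only [hZ, hD, hI, Finset.mem_sdiff, Finset.mem_insert, Finset.mem_inter]
    constructor
    · rintro ⟨rfl | h1, h2⟩
      · exact Or.inl rfl
      · right
        refine ⟨h1, ?_⟩
        by_contra hax
        exact h2 ⟨h1, hax⟩
    · rintro (rfl | ⟨h1, h2⟩)
      · exact ⟨Or.inl rfl, fun h => heY h.1⟩
      · exact ⟨Or.inr h1, fun h => h.2 h2⟩
  rw [hZD] at hco
  have hspan : rN (A ∪ D) ≤ rN A :=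
    rk_span E rN hsub D A hAE hDE (fun f hf => (hfail f hf).1)
  have hYAD : Y ⊆ A ∪ D := by
    intro a ha
    rw [Finset.mem_union]
    by_cases hax : a ∈ X
    · exact Or.inl (Finset.mem_erase.mpr ⟨fun h => heY (h ▸ ha), hax⟩)
    · exact Or.inr (Finset.mem_sdiff.mpr ⟨ha, hax⟩)
  have hYA : rN Y ≤ rN A :=
    le_trans (hmono Y (A ∪ D) hYAD (Finset.union_subset hAE hDE)) hspan
  have hAle : rN A ≤ rN I + (A \ I).card := by
    have h1 := rk_union_le E rN hunit (A \ I) I hIE ((Finset.sdiff_subset).trans hAE)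
    rwa [Finset.union_sdiff_of_subset hIA] at h1
  omega

/-- Let `N` be a matroid of rank `r` on `E`, given by its rank function `rN`
(normalized, monotone, unit-increasing, submodular, with `rN E = r`). Then
`ν_N(X) := r − rN(X)` is a valuation of the uniform matroid `U(r,E)`: for all
`r`-subsets `X, Y` of `E` and `e ∈ X \ Y` there is `f ∈ Y \ X` with
`ν_N(X) + ν_N(Y) ≥ ν_N(X−e+f) + ν_N(Y+e−f)`. -/
theorem corank_is_valuation_of_uniform {α : Type*} [DecidableEq α]
    (E : Finset α) (r : ℕ) (rN : Finset α → ℕ)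
    (h0 : rN ∅ = 0)
    (hmono : ∀ A B : Finset α, A ⊆ B → B ⊆ E → rN A ≤ rN B)
    (hunit : ∀ A : Finset α, A ⊆ E → ∀ e ∈ E, rN (insert e A) ≤ rN A + 1)
    (hsub : ∀ A B : Finset α, A ⊆ E → B ⊆ E → rN (A ∪ B) + rN (A ∩ B) ≤ rN A + rN B)
    (hrk : rN E = r)
    (X : Finset α) (hX : X ∈ E.powersetCard r)
    (Y : Finset α) (hY : Y ∈ E.powersetCard r)
    (e : α) (he : e ∈ X \ Y) :
    ∃ f ∈ Y \ X,
      ((r : ℝ) - rN (insert f (X.erase e))) + ((r : ℝ) - rN (insert e (Y.erase f)))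
        ≤ ((r : ℝ) - rN X) + ((r : ℝ) - rN Y) := by
  rw [Finset.mem_powersetCard] at hX hY
  obtain ⟨hXE, hXcard⟩ := hX
  obtain ⟨hYE, hYcard⟩ := hY
  rw [Finset.mem_sdiff] at he
  obtain ⟨heX, heY⟩ := he
  have heE : e ∈ E := hXE heX
  set A := X.erase e with hA
  set Z := insert e Y with hZ
  set D := Y \ X with hD
  set I := Y ∩ X with hI
  have hAX : A ⊆ X := Finset.erase_subset e X
  have hAE : A ⊆ E := hAX.trans hXE
  have heA : e ∉ A := Finset.notMem_erase e X
  have hXA : insert e A = X := Finset.insert_erase heX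
  have hYZ : Y ⊆ Z := Finset.subset_insert e Y
  have hZE : Z ⊆ E := Finset.insert_subset heE hYE
  have hDY : D ⊆ Y := Finset.sdiff_subset
  have hDE : D ⊆ E := hDY.trans hYE
  have hIA : I ⊆ A := by
    intro a ha
    rw [hI, Finset.mem_inter] at ha
    exact Finset.mem_erase.mpr ⟨fun h => heY (h ▸ ha.1), ha.2⟩
  -- rank basics
  have hrXA : rN X ≤ rN A + 1 := by
    rw [← hXA]; exact hunit A hAE e heE
  have hrAX : rN A ≤ rN X := hmono A X hAX hXE
  have hrYZ : rN Y ≤ rN Z := hmono Y Z hYZ hZE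
  have hrZY : rN Z ≤ rN Y + 1 := hunit Y hYE e heE
  -- cardinalities
  have hIDcard : I.card + D.card = r := by
    have h1 := Finset.card_inter_add_card_sdiff Y X
    rw [hYcard, ← hI, ← hD] at h1
    omega
  have hd1 : 1 ≤ D.card := by
    have h1 := Finset.card_inter_add_card_sdiff X Y
    rw [hXcard] at h1
    have h2 : 1 ≤ (X \ Y).card :=
      Finset.card_pos.mpr ⟨e, Finset.mem_sdiff.mpr ⟨heX, heY⟩⟩
    have h3 : (X ∩ Y).card = I.card := by rw [hI, Finset.inter_comm]
    omega
  have hcardA : A.card + 1 = r := by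
    rw [hA, Finset.card_erase_of_mem heX, hXcard]
    have : 1 ≤ X.card := Finset.card_pos.mpr ⟨e, heX⟩
    omega
  have hcard : (A \ I).card + 1 = D.card := by
    have h1 : (A \ I).card = A.card - I.card := Finset.card_sdiff_of_subset hIA
    have h2 : I.card ≤ A.card := Finset.card_le_card hIA
    omega
  -- reduce to the natural-number statement
  suffices h : ∃ f ∈ Y \ X, rN X + rN Y ≤ rN (insert f A) + rN (insert e (Y.erase f)) by
    obtain ⟨f, hf, hle⟩ := h
    refine ⟨f, hf, ?_⟩
    have hcast : (rN X : ℝ) + rN Y ≤ (rN (insert f A) : ℝ) + rN (insert e (Y.erase f)) := by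
      exact_mod_cast hle
    linarith
  by_cases hx0 : rN X ≤ rN A
  · by_cases hy1 : rN Y + 1 ≤ rN Z
    · -- trivial case: any f works
      obtain ⟨f, hfD⟩ := Finset.card_pos.mp hd1
      have hfY : f ∈ Y := hDY hfD
      have hfe : f ≠ e := fun h => heY (h ▸ hfY)
      have hfE : f ∈ E := hYE hfY
      have hfZ : f ∈ Z := hYZ hfY
      refine ⟨f, hfD, ?_⟩
      have hins : insert e (Y.erase f) = Z.erase f := by
        rw [hZ, Finset.erase_insert_of_ne hfe.symm]
      rw [hins]
      have h1 : rN A ≤ rN (insert f A) :=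
        hmono A (insert f A) (Finset.subset_insert f A) (Finset.insert_subset hfE hAE)
      have hdrop : rN Z ≤ rN (Z.erase f) + 1 := by
        have h2 : insert f (Z.erase f) = Z := Finset.insert_erase hfZ
        calc rN Z = rN (insert f (Z.erase f)) := by rw [h2]
          _ ≤ rN (Z.erase f) + 1 :=
            hunit _ ((Finset.erase_subset f Z).trans hZE) f hfE
      omega
    · -- case (εX, εY) = (0, 0)
      have hz0 : rN Z = rN Y := by omega
      have hZY' : rN Z + rN A = rN X + rN Y := by omega
      have hkey : rN I + rN Z ≤ rN (insert e I) + rN Y := by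
        have h1 : rN I ≤ rN (insert e I) :=
          hmono I (insert e I) (Finset.subset_insert e I)
            (Finset.insert_subset heE (hIA.trans hAE))
        omega
      exact rk_caseB E rN hmono hunit hsub X Y e hXE hYE heX heY hcard hZY' hkey
  · by_cases hy1 : rN Y + 1 ≤ rN Z
    · -- case (εX, εY) = (1, 1)
      have hx1' : rN X = rN A + 1 := by omega
      have hz1 : rN Z = rN Y + 1 := by omega
      have hZY' : rN Z + rN A = rN X + rN Y := by omega
      have hIe : rN I + 1 ≤ rN (insert e I) := by
        by_contra hcc
        push_neg at hcc
        have h1 : rN (insert e A) ≤ rN A :=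
          rk_depmono E rN hsub hIA hAE heE (by
            have := hmono I (insert e I) (Finset.subset_insert e I)
              (Finset.insert_subset heE (hIA.trans hAE))
            omega)
        rw [hXA] at h1
        omega
      have hkey : rN I + rN Z ≤ rN (insert e I) + rN Y := by omega
      exact rk_caseB E rN hmono hunit hsub X Y e hXE hYE heX heY hcard hZY' hkey
    · -- case (εX, εY) = (1, 0): minimal circuit argument
      have hx1' : rN X = rN A + 1 := by omega
      have hz0 : rN Z = rN Y := by omega
      have hYP : Y ∈ Y.powerset.filter (fun S => rN (insert e S) ≤ rN S) := by
        rw [Finset.mem_filter, Finset.mem_powerset]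
        refine ⟨subset_rfl, ?_⟩
        rw [← hZ]
        omega
      obtain ⟨C, hCP, hCmin⟩ :=
        Finset.exists_min_image (Y.powerset.filter (fun S => rN (insert e S) ≤ rN S))
          Finset.card ⟨Y, hYP⟩
      rw [Finset.mem_filter, Finset.mem_powerset] at hCP
      obtain ⟨hCY, hCdep⟩ := hCP
      have hCE : C ⊆ E := hCY.trans hYE
      -- find f ∈ C independent over A
      have hex : ∃ f ∈ C, rN A + 1 ≤ rN (insert f A) := by
        by_contra hno
        push_neg at hno
        have h1 : rN (A ∪ C) ≤ rN A :=
          rk_span E rN hsub C A hAE hCE (fun f hf => by have := hno f hf; omega)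
        have h2 : rN (insert e (A ∪ C)) ≤ rN (A ∪ C) :=
          rk_depmono E rN hsub Finset.subset_union_right
            (Finset.union_subset hAE hCE) heE hCdep
        have h3 : rN (insert e A) ≤ rN (insert e (A ∪ C)) :=
          hmono _ _ (Finset.insert_subset_insert e Finset.subset_union_left)
            (Finset.insert_subset heE (Finset.union_subset hAE hCE))
        rw [hXA] at h3
        omega
      obtain ⟨f, hfC, hfA⟩ := hex
      have hfY : f ∈ Y := hCY hfC
      have hfe : f ≠ e := fun h => heY (h ▸ hfY)
      have hfE : f ∈ E := hYE hfY
      have hfX : f ∉ X := by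
        intro hfX
        have hfA' : f ∈ A := Finset.mem_erase.mpr ⟨hfe, hfX⟩
        rw [Finset.insert_eq_self.mpr hfA'] at hfA
        omega
      refine ⟨f, Finset.mem_sdiff.mpr ⟨hfY, hfX⟩, ?_⟩
      -- show f depends on (C \ {f}) + e, hence on (Y \ {f}) + e
      have hmin : ¬ rN (insert e (C.erase f)) ≤ rN (C.erase f) := by
        intro hcc
        have hmem : C.erase f ∈ Y.powerset.filter (fun S => rN (insert e S) ≤ rN S) := by
          rw [Finset.mem_filter, Finset.mem_powerset]
          exact ⟨(Finset.erase_subset f C).trans hCY, hcc⟩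
        have h1 := hCmin _ hmem
        have h2 := Finset.card_erase_of_mem hfC
        have h3 : 1 ≤ C.card := Finset.card_pos.mpr ⟨f, hfC⟩
        omega
      push_neg at hmin
      have hCdrop : rN C ≤ rN (C.erase f) + 1 := by
        have h1 : insert f (C.erase f) = C := Finset.insert_erase hfC
        calc rN C = rN (insert f (C.erase f)) := by rw [h1]
          _ ≤ rN (C.erase f) + 1 :=
            hunit _ ((Finset.erase_subset f C).trans hCE) f hfE
      have hCe_mono : rN (insert e (C.erase f)) ≤ rN (insert e C) :=
        hmono _ _ (Finset.insert_subset_insert e (Finset.erase_subset f C))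
          (Finset.insert_subset heE hCE)
      have hkey : rN (insert f (insert e (C.erase f))) ≤ rN (insert e (C.erase f)) := by
        have hset : insert f (insert e (C.erase f)) = insert e C := by
          rw [Finset.insert_comm, Finset.insert_erase hfC]
        rw [hset]
        omega
      have hsubset : insert e (C.erase f) ⊆ insert e (Y.erase f) := by
        refine Finset.insert_subset_insert e ?_
        intro a ha
        rw [Finset.mem_erase] at ha ⊢
        exact ⟨ha.1, hCY ha.2⟩
      have hBE : insert e (Y.erase f) ⊆ E :=
        Finset.insert_subset heE ((Finset.erase_subset f Y).trans hYE)
      have hlift : rN (insert f (insert e (Y.erase f))) ≤ rN (insert e (Y.erase f)) :=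
        rk_depmono E rN hsub hsubset hBE hfE hkey
      have hset2 : insert f (insert e (Y.erase f)) = Z := by
        rw [Finset.insert_comm, Finset.insert_erase hfY]
      rw [hset2] at hlift
      omega
end

section
/- Let M = (E, B) be a matroid of rank r on n elements. Then log₂ of the number of cells of the Dressian D(M) is at most |Z₁(M)|, where Z₁(M) is the set of symbols (S, ab, cd) with all six of Sab, Scd, Sac, Sbd, Sad, Sbc bases of M. Consequently log₂ #D(M) ≤ C(n, r−2)·C(n−r+2, 4)·6. -/
/-!
If `Sab` or `Scd` is not a basis, so that `ν(Sab) + ν(Scd) = ∞`, the valuated exchange axiom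
applied to `a ∈ Sad \ Sbc` can only return the pair `(Sbd, Sac)`, which gives
`ν(Sac) + ν(Sbd) ≤ ν(Sad) + ν(Sbc)`; exchanging `a` out of `Sac` against `Sbd` gives the
reverse inequality. So at such a symbol the relation holds exactly when both cross terms are
infinite or both are finite, which depends on the matroid alone. A cell is therefore
determined by which symbols of `Z₁(M)` satisfy the relation, and there are at most
`2^{|Z₁(M)|}` such patterns. Finally `(S, ab, cd) ↦ (S, abcd, ab)` embeds `Z₁(M)` into the
triples of an `(r-2)`-set, a 4-subset of its complement and a 2-subset of that.
-/

/-- `ν : C(E,r) → ℝ∞` is (the extension of) a valuation of the matroid `(E, ℬ)`: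
its finite support is exactly `ℬ` and it satisfies the valuated exchange axiom (V). -/
def IsValuationOf {α : Type*} [DecidableEq α] (E : Finset α) (r : ℕ)
    (ℬ : Finset (Finset α)) (ν : Finset α → WithTop ℝ) : Prop :=
  (∀ B, ν B = ⊤ ↔ B ∉ ℬ) ∧
  ∀ B ∈ E.powersetCard r, ∀ B' ∈ E.powersetCard r, ∀ e ∈ B \ B',
    ∃ f ∈ B' \ B, ν (insert f (B.erase e)) + ν (insert e (B'.erase f)) ≤ ν B + ν B'

/-- Combinatorial equivalence of two valuations: at each symbol `(S, ab, cd)` the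
three-term tropical Plücker relation degenerates in the same way. -/
def CombEquiv {α : Type*} [DecidableEq α] (E : Finset α) (r : ℕ)
    (ν ν' : Finset α → WithTop ℝ) : Prop :=
  ∀ S ∈ E.powersetCard (r - 2), ∀ a ∈ E \ S, ∀ b ∈ E \ S, ∀ c ∈ E \ S, ∀ d ∈ E \ S,
    a ≠ b → a ≠ c → a ≠ d → b ≠ c → b ≠ d → c ≠ d →
    (ν (insert a (insert c S)) + ν (insert b (insert d S))
        = ν (insert a (insert d S)) + ν (insert b (insert c S)) ↔
     ν' (insert a (insert c S)) + ν' (insert b (insert d S))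
        = ν' (insert a (insert d S)) + ν' (insert b (insert c S)))

open Finset

lemma eq_iff_eq_top_iff_eq_top_of_or {β : Type*} [Top β] {x y : β} (h : x = ⊤ ∨ y = ⊤) :
    x = y ↔ (x = ⊤ ↔ y = ⊤) := by
  refine ⟨fun hxy => hxy ▸ Iff.rfl, fun hxy => ?_⟩
  rcases h with hx | hy
  · rw [hx, hxy.1 hx]
  · rw [hy, hxy.2 hy]

lemma card_disjoint_pairs_le {α : Type*} [DecidableEq α] (T : Finset α) :
    #{p ∈ T.powersetCard 2 ×ˢ T.powersetCard 2 | Disjoint p.1 p.2} ≤ T.card.choose 4 * 6 := by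
  calc #{p ∈ T.powersetCard 2 ×ˢ T.powersetCard 2 | Disjoint p.1 p.2}
      ≤ #((T.powersetCard 4).sigma fun F => F.powersetCard 2) := by
        refine card_le_card_of_injOn (fun p => ⟨p.1 ∪ p.2, p.1⟩) ?_ ?_
        · intro p hp
          simp only [mem_coe, mem_filter, mem_product, mem_powersetCard] at hp
          obtain ⟨⟨⟨hPT, hP⟩, hQT, hQ⟩, hPQ⟩ := hp
          simp only [coe_sigma, Set.mem_sigma_iff, mem_coe, mem_powersetCard]
          exact ⟨⟨union_subset hPT hQT, by rw [card_union_of_disjoint hPQ, hP, hQ]⟩,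
            subset_union_left, hP⟩
        · rintro ⟨P, Q⟩ hp ⟨P', Q'⟩ hp' h
          simp only [mem_coe, mem_filter] at hp hp'
          simp only [Sigma.mk.injEq, heq_eq_eq] at h
          obtain ⟨hunion, rfl⟩ := h
          rw [← union_sdiff_cancel_left hp.2, hunion, union_sdiff_cancel_left hp'.2]
    _ = T.card.choose 4 * 6 := by
        rw [card_sigma, sum_congr rfl fun F hF => by
          rw [card_powersetCard, (mem_powersetCard.1 hF).2], sum_const, card_powersetCard,
          smul_eq_mul]
        rfl

section Valuation

variable {α : Type*} [DecidableEq α] {E : Finset α} {r : ℕ} {ℬ : Finset (Finset α)}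
  {ν ν' : Finset α → WithTop ℝ}

def CrossTermsEq (ν : Finset α → WithTop ℝ) (S : Finset α) (a b c d : α) : Prop :=
  ν (insert a (insert c S)) + ν (insert b (insert d S))
    = ν (insert a (insert d S)) + ν (insert b (insert c S))

lemma CrossTermsEq.swap_left {S : Finset α} {a b c d : α} (h : CrossTermsEq ν S a b c d) :
    CrossTermsEq ν S b a c d := by
  unfold CrossTermsEq at h ⊢
  exact (add_comm _ _).trans (h.symm.trans (add_comm _ _))

lemma CrossTermsEq.swap_right {S : Finset α} {a b c d : α} (h : CrossTermsEq ν S a b c d) :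
    CrossTermsEq ν S a b d c :=
  h.symm

namespace IsValuationOf

lemma add_eq_top_iff (hν : IsValuationOf E r ℬ ν) {B B' : Finset α} :
    ν B + ν B' = ⊤ ↔ B ∉ ℬ ∨ B' ∉ ℬ := by
  rw [WithTop.add_eq_top, hν.1, hν.1]

lemma cross_le_of_add_eq_top (hν : IsValuationOf E r ℬ ν)
    (hBE : ∀ B ∈ ℬ, B ∈ E.powersetCard r) {S : Finset α} {a b c d : α}
    (ha : a ∉ S) (hb : b ∉ S) (hc : c ∉ S)
    (hab : a ≠ b) (hac : a ≠ c) (had : a ≠ d) (hbc : b ≠ c)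
    (htop : ν (insert a (insert b S)) + ν (insert c (insert d S)) = ⊤) :
    ν (insert a (insert c S)) + ν (insert b (insert d S))
      ≤ ν (insert a (insert d S)) + ν (insert b (insert c S)) := by
  by_cases hR : ν (insert a (insert d S)) + ν (insert b (insert c S)) = ⊤
  · exact hR ▸ le_top
  obtain ⟨hAD, hBC⟩ : insert a (insert d S) ∈ ℬ ∧ insert b (insert c S) ∈ ℬ := by
    simpa [hν.add_eq_top_iff] using hR
  obtain ⟨f, hf, hle⟩ := hν.2 _ (hBE _ hAD) _ (hBE _ hBC) a (by simp [ha, hab, hac])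
  rw [erase_insert (by simp [had, ha])] at hle
  obtain hfb | hfc : f = b ∨ f = c := by
    simp only [mem_sdiff, mem_insert] at hf
    tauto
  · rw [hfb, erase_insert (by simp [hbc, hb]), add_comm] at hle
    exact hle
  · rw [hfc, erase_insert_of_ne hbc, erase_insert hc, add_comm, htop,
      top_le_iff] at hle
    exact absurd hle hR

lemma crossTermsEq_of_add_eq_top (hν : IsValuationOf E r ℬ ν)
    (hBE : ∀ B ∈ ℬ, B ∈ E.powersetCard r) {S : Finset α} {a b c d : α}
    (ha : a ∉ S) (hb : b ∉ S) (hc : c ∉ S) (hd : d ∉ S)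
    (hab : a ≠ b) (hac : a ≠ c) (had : a ≠ d) (hbc : b ≠ c) (hbd : b ≠ d)
    (htop : ν (insert a (insert b S)) + ν (insert c (insert d S)) = ⊤) :
    CrossTermsEq ν S a b c d :=
  le_antisymm (hν.cross_le_of_add_eq_top hBE ha hb hc hab hac had hbc htop)
    (hν.cross_le_of_add_eq_top hBE ha hb hd hab had hac hbd (by rwa [insert_comm d c]))

lemma crossTermsEq_iff (hν : IsValuationOf E r ℬ ν)
    (hBE : ∀ B ∈ ℬ, B ∈ E.powersetCard r) {S : Finset α} {a b c d : α}
    (ha : a ∉ S) (hb : b ∉ S) (hc : c ∉ S) (hd : d ∉ S)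
    (hab : a ≠ b) (hac : a ≠ c) (had : a ≠ d) (hbc : b ≠ c) (hbd : b ≠ d)
    (hnot : ¬(insert a (insert b S) ∈ ℬ ∧ insert c (insert d S) ∈ ℬ ∧
      insert a (insert c S) ∈ ℬ ∧ insert b (insert d S) ∈ ℬ ∧
      insert a (insert d S) ∈ ℬ ∧ insert b (insert c S) ∈ ℬ)) :
    CrossTermsEq ν S a b c d ↔
      (insert a (insert c S) ∉ ℬ ∨ insert b (insert d S) ∉ ℬ ↔
        insert a (insert d S) ∉ ℬ ∨ insert b (insert c S) ∉ ℬ) := by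
  rw [← hν.add_eq_top_iff, ← hν.add_eq_top_iff]
  by_cases hAB : ν (insert a (insert b S)) + ν (insert c (insert d S)) = ⊤
  · have h := hν.crossTermsEq_of_add_eq_top hBE ha hb hc hd hab hac had hbc hbd hAB
    exact iff_of_true h (by rw [h])
  · apply eq_iff_eq_top_iff_eq_top_of_or
    rw [hν.add_eq_top_iff] at hAB
    simp only [hν.add_eq_top_iff]
    tauto

lemma crossTermsEq_iff_crossTermsEq (hν : IsValuationOf E r ℬ ν)
    (hν' : IsValuationOf E r ℬ ν') (hBE : ∀ B ∈ ℬ, B ∈ E.powersetCard r)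
    {S : Finset α} {a b c d : α} (ha : a ∉ S) (hb : b ∉ S) (hc : c ∉ S) (hd : d ∉ S)
    (hab : a ≠ b) (hac : a ≠ c) (had : a ≠ d) (hbc : b ≠ c) (hbd : b ≠ d)
    (hnot : ¬(insert a (insert b S) ∈ ℬ ∧ insert c (insert d S) ∈ ℬ ∧
      insert a (insert c S) ∈ ℬ ∧ insert b (insert d S) ∈ ℬ ∧
      insert a (insert d S) ∈ ℬ ∧ insert b (insert c S) ∈ ℬ)) :
    CrossTermsEq ν S a b c d ↔ CrossTermsEq ν' S a b c d := by
  rw [hν.crossTermsEq_iff hBE ha hb hc hd hab hac had hbc hbd hnot,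
    hν'.crossTermsEq_iff hBE ha hb hc hd hab hac had hbc hbd hnot]

end IsValuationOf

lemma combEquiv_of_forall_bases (hν : IsValuationOf E r ℬ ν)
    (hν' : IsValuationOf E r ℬ ν') (hBE : ∀ B ∈ ℬ, B ∈ E.powersetCard r)
    (hagree : ∀ S ∈ E.powersetCard (r - 2), ∀ a ∈ E \ S, ∀ b ∈ E \ S, ∀ c ∈ E \ S,
      ∀ d ∈ E \ S, a ≠ b → a ≠ c → a ≠ d → b ≠ c → b ≠ d → c ≠ d →
      insert a (insert b S) ∈ ℬ → insert c (insert d S) ∈ ℬ →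
      insert a (insert c S) ∈ ℬ → insert b (insert d S) ∈ ℬ →
      insert a (insert d S) ∈ ℬ → insert b (insert c S) ∈ ℬ →
      (CrossTermsEq ν S a b c d ↔ CrossTermsEq ν' S a b c d)) :
    CombEquiv E r ν ν' := by
  intro S hS a ha b hb c hc d hd hab hac had hbc hbd hcd
  by_cases hall : insert a (insert b S) ∈ ℬ ∧ insert c (insert d S) ∈ ℬ ∧
      insert a (insert c S) ∈ ℬ ∧ insert b (insert d S) ∈ ℬ ∧
      insert a (insert d S) ∈ ℬ ∧ insert b (insert c S) ∈ ℬ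
  · obtain ⟨h₁, h₂, h₃, h₄, h₅, h₆⟩ := hall
    exact hagree S hS a ha b hb c hc d hd hab hac had hbc hbd hcd h₁ h₂ h₃ h₄ h₅ h₆
  · exact hν.crossTermsEq_iff_crossTermsEq hν' hBE (mem_sdiff.1 ha).2 (mem_sdiff.1 hb).2
      (mem_sdiff.1 hc).2 (mem_sdiff.1 hd).2 hab hac had hbc hbd hall

end Valuation

section Cells

variable {α : Type*} [DecidableEq α] {E : Finset α} {r : ℕ} {ℬ : Finset (Finset α)}

/-- The set `Z₁(M)`, a symbol `(S, ab, cd)` being encoded as `(S, {a, b}, {c, d})`. -/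
def basisSymbols (E : Finset α) (r : ℕ) (ℬ : Finset (Finset α)) :
    Finset (Finset α × Finset α × Finset α) :=
  ((E.powersetCard (r - 2)) ×ˢ ((E.powersetCard 2) ×ˢ (E.powersetCard 2))).filter
    (fun x => x.2.1 ⊆ E \ x.1 ∧ x.2.2 ⊆ E \ x.1 ∧ Disjoint x.2.1 x.2.2 ∧
      x.1 ∪ x.2.1 ∈ ℬ ∧ x.1 ∪ x.2.2 ∈ ℬ ∧
      ∀ a ∈ x.2.1, ∀ c ∈ x.2.2, x.1 ∪ {a, c} ∈ ℬ)

lemma card_basisSymbols_le {n : ℕ} (hn : E.card = n) :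
    #(basisSymbols E r ℬ) ≤ n.choose (r - 2) * (n - r + 2).choose 4 * 6 := by
  have hfiber : ∀ S ∈ E.powersetCard (r - 2),
      #{x ∈ basisSymbols E r ℬ | x.1 = S} ≤ (n - r + 2).choose 4 * 6 := by
    intro S hS
    calc #{x ∈ basisSymbols E r ℬ | x.1 = S}
        ≤ #{p ∈ (E \ S).powersetCard 2 ×ˢ (E \ S).powersetCard 2 | Disjoint p.1 p.2} := by
          refine card_le_card_of_injOn Prod.snd ?_ ?_
          · intro x hx
            simp only [basisSymbols, mem_coe, mem_filter, mem_product, mem_powersetCard] at hx ⊢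
            obtain ⟨⟨⟨-, ⟨-, hP⟩, -, hQ⟩, hPE, hQE, hPQ, -⟩, rfl⟩ := hx
            exact ⟨⟨⟨hPE, hP⟩, hQE, hQ⟩, hPQ⟩
          · intro x hx y hy hxy
            simp only [mem_coe, mem_filter] at hx hy
            exact Prod.ext (hx.2.trans hy.2.symm) hxy
      _ ≤ (E \ S).card.choose 4 * 6 := card_disjoint_pairs_le _
      _ ≤ (n - r + 2).choose 4 * 6 := by
          obtain ⟨hSE, hScard⟩ := mem_powersetCard.1 hS
          gcongr
          rw [card_sdiff_of_subset hSE, hScard, hn]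
          omega
  calc #(basisSymbols E r ℬ) ≤ (n - r + 2).choose 4 * 6 * #(E.powersetCard (r - 2)) :=
        card_le_mul_card_image_of_maps_to
          (fun x hx => (mem_product.1 (mem_filter.1 hx).1).1) _ hfiber
    _ = n.choose (r - 2) * (n - r + 2).choose 4 * 6 := by
        rw [card_powersetCard, hn]
        ring

def CrossPattern (ν : Finset α → WithTop ℝ) (x : Finset α × Finset α × Finset α) : Prop :=
  ∀ a ∈ x.2.1, ∀ b ∈ x.2.1, ∀ c ∈ x.2.2, ∀ d ∈ x.2.2, a ≠ b → c ≠ d →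
    CrossTermsEq ν x.1 a b c d

lemma crossPattern_pair_iff {ν : Finset α → WithTop ℝ} {S : Finset α} {a b c d : α}
    (hab : a ≠ b) (hcd : c ≠ d) :
    CrossPattern ν (S, {a, b}, {c, d}) ↔ CrossTermsEq ν S a b c d := by
  refine ⟨fun h => h a (by simp) b (by simp) c (by simp) d (by simp) hab hcd, ?_⟩
  intro h a' ha' b' hb' c' hc' d' hd' hab' hcd'
  simp only [mem_insert, mem_singleton] at ha' hb' hc' hd'
  have h' : CrossTermsEq ν S a' b' c d := by
    obtain ⟨rfl, rfl⟩ | ⟨rfl, rfl⟩ : a' = a ∧ b' = b ∨ a' = b ∧ b' = a := by grind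
    exacts [h, h.swap_left]
  obtain ⟨rfl, rfl⟩ | ⟨rfl, rfl⟩ : c' = c ∧ d' = d ∨ c' = d ∧ d' = c := by grind
  exacts [h', h'.swap_right]

lemma crossPattern_iff_of_combEquiv {ν ν' : Finset α → WithTop ℝ} (h : CombEquiv E r ν ν')
    {x : Finset α × Finset α × Finset α} (hx : x ∈ basisSymbols E r ℬ) :
    CrossPattern ν x ↔ CrossPattern ν' x := by
  obtain ⟨hmem, hP, hQ, hPQ, -⟩ := mem_filter.1 hx
  have hne := disjoint_iff_ne.1 hPQ
  refine forall₂_congr fun a ha => forall₂_congr fun b hb => forall₂_congr fun c hc =>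
    forall₂_congr fun d hd => imp_congr_right fun hab => imp_congr_right fun hcd => ?_
  exact h x.1 (mem_product.1 hmem).1 a (hP ha) b (hP hb) c (hQ hc) d (hQ hd) hab
    (hne a ha c hc) (hne a ha d hd) (hne b hb c hc) (hne b hb d hd) hcd

abbrev DressianCell (E : Finset α) (r : ℕ) (ℬ : Finset (Finset α)) : Type _ :=
  Quot (fun (ν ν' : {ν : Finset α → WithTop ℝ // IsValuationOf E r ℬ ν}) =>
    CombEquiv E r ν.1 ν'.1)

/-- The restriction `[ν]₁` of the paper. -/
def DressianCell.crossPattern : DressianCell E r ℬ → (basisSymbols E r ℬ → Prop) :=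
  Quot.lift (fun ν x => CrossPattern ν.1 x.1) fun _ _ h =>
    funext fun x => propext (crossPattern_iff_of_combEquiv h x.2)

lemma mem_basisSymbols {S : Finset α} {a b c d : α} (hS : S ∈ E.powersetCard (r - 2))
    (ha : a ∈ E \ S) (hb : b ∈ E \ S) (hc : c ∈ E \ S) (hd : d ∈ E \ S)
    (hab : a ≠ b) (hac : a ≠ c) (had : a ≠ d) (hbc : b ≠ c) (hbd : b ≠ d) (hcd : c ≠ d)
    (h₁ : insert a (insert b S) ∈ ℬ) (h₂ : insert c (insert d S) ∈ ℬ)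
    (h₃ : insert a (insert c S) ∈ ℬ) (h₄ : insert b (insert d S) ∈ ℬ)
    (h₅ : insert a (insert d S) ∈ ℬ) (h₆ : insert b (insert c S) ∈ ℬ) :
    (S, {a, b}, {c, d}) ∈ basisSymbols E r ℬ := by
  have hE : ∀ {y}, y ∈ E \ S → y ∈ E := fun hy => (mem_sdiff.1 hy).1
  have hunion : ∀ x y, S ∪ {x, y} = insert x (insert y S) := by simp [union_insert]
  refine mem_filter.2 ⟨mem_product.2 ⟨hS, mem_product.2 ⟨?_, ?_⟩⟩, ?_, ?_, ?_, ?_, ?_, ?_⟩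
  · simp [insert_subset_iff, hE ha, hE hb, card_pair hab]
  · simp [insert_subset_iff, hE hc, hE hd, card_pair hcd]
  · simp [insert_subset_iff, ha, hb]
  · simp [insert_subset_iff, hc, hd]
  · exact disjoint_iff_ne.2 (by simp [hac, had, hbc, hbd])
  · rwa [hunion]
  · rwa [hunion]
  · simp only [mem_insert, mem_singleton, forall_eq_or_imp, forall_eq, hunion]
    exact ⟨⟨h₃, h₅⟩, h₆, h₄⟩

lemma DressianCell.crossPattern_injective (hBE : ∀ B ∈ ℬ, B ∈ E.powersetCard r) :
    Function.Injective (DressianCell.crossPattern (E := E) (r := r) (ℬ := ℬ)) := by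
  intro q q' h
  induction q, q' using Quot.induction_on₂ with
  | h ν ν' =>
  refine Quot.sound (combEquiv_of_forall_bases ν.2 ν'.2 hBE ?_)
  intro S hS a ha b hb c hc d hd hab hac had hbc hbd hcd h₁ h₂ h₃ h₄ h₅ h₆
  have hx := congrFun h
    ⟨_, mem_basisSymbols hS ha hb hc hd hab hac had hbc hbd hcd h₁ h₂ h₃ h₄ h₅ h₆⟩
  exact (crossPattern_pair_iff hab hcd).symm.trans
    ((iff_of_eq hx).trans (crossPattern_pair_iff hab hcd))

lemma card_dressianCell_le (hBE : ∀ B ∈ ℬ, B ∈ E.powersetCard r) :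
    Nat.card (DressianCell E r ℬ) ≤ 2 ^ #(basisSymbols E r ℬ) := by
  calc Nat.card (DressianCell E r ℬ) ≤ Nat.card (basisSymbols E r ℬ → Prop) :=
        Nat.card_le_card_of_injective _ (DressianCell.crossPattern_injective hBE)
    _ = 2 ^ #(basisSymbols E r ℬ) := by simp

end Cells

theorem card_dressian_cells_le_general {α : Type*} [DecidableEq α]
    (E : Finset α) (n r : ℕ) (hn : E.card = n)
    (ℬ : Finset (Finset α)) (hBE : ∀ B ∈ ℬ, B ∈ E.powersetCard r) :
    let Z₁ := ((E.powersetCard (r - 2)) ×ˢ ((E.powersetCard 2) ×ˢ (E.powersetCard 2))).filter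
      (fun x => x.2.1 ⊆ E \ x.1 ∧ x.2.2 ⊆ E \ x.1 ∧ Disjoint x.2.1 x.2.2 ∧
        x.1 ∪ x.2.1 ∈ ℬ ∧ x.1 ∪ x.2.2 ∈ ℬ ∧
        ∀ a ∈ x.2.1, ∀ c ∈ x.2.2, x.1 ∪ {a, c} ∈ ℬ)
    Nat.card (Quot (fun (ν ν' : {ν : Finset α → WithTop ℝ // IsValuationOf E r ℬ ν}) =>
        CombEquiv E r ν.1 ν'.1)) ≤ 2 ^ Z₁.card ∧
    Nat.card (Quot (fun (ν ν' : {ν : Finset α → WithTop ℝ // IsValuationOf E r ℬ ν}) =>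
        CombEquiv E r ν.1 ν'.1)) ≤ 2 ^ (n.choose (r - 2) * (n - r + 2).choose 4 * 6) := by
  have hcells : Nat.card (DressianCell E r ℬ) ≤ 2 ^ #(basisSymbols E r ℬ) :=
    card_dressianCell_le hBE
  exact ⟨hcells, hcells.trans (Nat.pow_le_pow_right two_pos (card_basisSymbols_le hn))⟩

/-- The number of cells of the Dressian of a matroid `M = (E, ℬ)` of rank `r` on `n`
elements (= the number of combinatorial equivalence classes of valuations of `M`) is at
most `2^{|Z₁(M)|}`, where `Z₁(M)` is the set of symbols `(S, ab, cd)` all six of whose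
associated `r`-sets are bases; consequently it is at most
`2^{C(n,r−2)·C(n−r+2,4)·6}`. -/
theorem card_dressian_cells_le {α : Type*} [DecidableEq α]
    (E : Finset α) (n r : ℕ) (hn : E.card = n) (hr2 : 2 ≤ r) (hrn : r ≤ n)
    (ℬ : Finset (Finset α)) (hBE : ∀ B ∈ ℬ, B ∈ E.powersetCard r) (hBne : ℬ.Nonempty)
    (hexch : ∀ B ∈ ℬ, ∀ B' ∈ ℬ, ∀ e ∈ B \ B', ∃ f ∈ B' \ B,
      insert f (B.erase e) ∈ ℬ ∧ insert e (B'.erase f) ∈ ℬ) :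
    let Z₁ := ((E.powersetCard (r - 2)) ×ˢ ((E.powersetCard 2) ×ˢ (E.powersetCard 2))).filter
      (fun x => x.2.1 ⊆ E \ x.1 ∧ x.2.2 ⊆ E \ x.1 ∧ Disjoint x.2.1 x.2.2 ∧
        x.1 ∪ x.2.1 ∈ ℬ ∧ x.1 ∪ x.2.2 ∈ ℬ ∧
        ∀ a ∈ x.2.1, ∀ c ∈ x.2.2, x.1 ∪ {a, c} ∈ ℬ)
    Nat.card (Quot (fun (ν ν' : {ν : Finset α → WithTop ℝ // IsValuationOf E r ℬ ν}) =>
        CombEquiv E r ν.1 ν'.1)) ≤ 2 ^ Z₁.card ∧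
    Nat.card (Quot (fun (ν ν' : {ν : Finset α → WithTop ℝ // IsValuationOf E r ℬ ν}) =>
        CombEquiv E r ν.1 ν'.1)) ≤ 2 ^ (n.choose (r - 2) * (n - r + 2).choose 4 * 6) :=
  card_dressian_cells_le_general E n r hn ℬ hBE
end

section
/- Let G = J(r,E) be the Johnson graph on r-subsets of E, let N = (E, B) be a matroid of rank r, and let U = C(E,r) \ B be its set of dependent r-sets. If C₁, ..., C_k are the vertex sets of the connected components of the induced subgraph of J(r,E) on U, then for each i, the pair N_i := (E, C(E,r) \ C_i) is a matroid. -/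
open Finset

private lemma walk_prop {V : Type*} {G : SimpleGraph V} (P : V → Prop)
    (h : ∀ a b, G.Adj a b → P b) {x y : V} (w : G.Walk x y) : P x → P y := by
  induction w with
  | nil => exact id
  | cons ha p ih => exact fun _ => ih (h _ _ ha)

private lemma sdiff_insert_erase_card {α : Type*} [DecidableEq α]
    (X : Finset α) (a b : α) (ha : a ∈ X) (hb : b ∉ X) :
    (X \ insert b (X.erase a)).card = 1 := by
  have hset : X \ insert b (X.erase a) = {a} := by
    ext x
    constructor
    · intro hx
      obtain ⟨hx1, hx2⟩ := mem_sdiff.1 hx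
      rw [mem_singleton]
      by_contra hxa
      exact hx2 (mem_insert_of_mem (mem_erase.2 ⟨hxa, hx1⟩))
    · intro hx
      rw [mem_singleton] at hx
      subst hx
      refine mem_sdiff.2 ⟨ha, fun hmem => ?_⟩
      rcases mem_insert.1 hmem with h | h
      · exact hb (h ▸ ha)
      · exact (mem_erase.1 h).1 rfl
  rw [hset, card_singleton]

private lemma path_lemma {α : Type*} [DecidableEq α] {E : Finset α} {r : ℕ}
    {U : Set (Finset α)} {G : SimpleGraph (Finset α)}
    (hG : ∀ X Y : Finset α, X ∈ U → Y ∈ U → (X \ Y).card = 1 → G.Adj X Y) :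
    ∀ (n : ℕ) (X Y : Finset α), (X \ Y).card ≤ n → X ⊆ E → Y ⊆ E →
      X.card = r → Y.card = r → X ∈ U → Y ∈ U →
      (∀ S : Finset α, S ⊆ E → S.card = r → X ∩ Y ⊆ S → S ⊆ X ∪ Y → S ∈ U) →
      G.Reachable X Y := by
  intro n
  induction n with
  | zero =>
    intro X Y hc _ _ hX hY _ _ _
    have hsub : X ⊆ Y := by
      rw [← Finset.sdiff_eq_empty_iff_subset]
      exact Finset.card_eq_zero.1 (Nat.le_zero.1 hc)
    have : X = Y := Finset.eq_of_subset_of_card_le hsub (by omega)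
    exact this ▸ SimpleGraph.Reachable.refl X
  | succ n ih =>
    intro X Y hc hXE hYE hXc hYc hXU hYU hS
    by_cases hXY : X = Y
    · exact hXY ▸ SimpleGraph.Reachable.refl X
    · have hne : (X \ Y).Nonempty := by
        rw [Finset.sdiff_nonempty]
        intro hsub
        exact hXY (Finset.eq_of_subset_of_card_le hsub (by omega))
      obtain ⟨a, ha⟩ := hne
      have haX := (mem_sdiff.1 ha).1
      have haY := (mem_sdiff.1 ha).2
      have hne' : (Y \ X).Nonempty := by
        rw [Finset.sdiff_nonempty]
        intro hsub
        exact hXY (Finset.eq_of_subset_of_card_le hsub (by omega)).symm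
      obtain ⟨b, hb⟩ := hne'
      have hbY := (mem_sdiff.1 hb).1
      have hbX := (mem_sdiff.1 hb).2
      set X' := insert b (X.erase a) with hX'def
      have hX'c : X'.card = r := by
        rw [hX'def, card_insert_of_notMem (fun h => hbX (erase_subset _ _ h)),
          card_erase_of_mem haX]
        have : 0 < X.card := card_pos.2 ⟨a, haX⟩
        omega
      have hX'E : X' ⊆ E := insert_subset (hYE hbY) ((erase_subset _ _).trans hXE)
      have hint : X ∩ Y ⊆ X' := by
        intro x hx
        obtain ⟨hx1, hx2⟩ := mem_inter.1 hx
        exact mem_insert_of_mem (mem_erase.2 ⟨fun h => haY (h ▸ hx2), hx1⟩)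
      have hX'sub : X' ⊆ X ∪ Y :=
        insert_subset (mem_union_right _ hbY) ((erase_subset _ _).trans subset_union_left)
      have hX'U : X' ∈ U := hS X' hX'E hX'c hint hX'sub
      have hadj : G.Adj X X' :=
        hG X X' hXU hX'U (sdiff_insert_erase_card X a b haX hbX)
      have hc' : (X' \ Y).card ≤ n := by
        have hsub : X' \ Y ⊆ (X \ Y).erase a := by
          intro x hx
          obtain ⟨hx1, hx2⟩ := mem_sdiff.1 hx
          rcases mem_insert.1 hx1 with h | h
          · exact absurd (h ▸ hbY) hx2
          · obtain ⟨hxa, hxX⟩ := mem_erase.1 h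
            exact mem_erase.2 ⟨hxa, mem_sdiff.2 ⟨hxX, hx2⟩⟩
        have h1 := card_le_card hsub
        rw [card_erase_of_mem ha] at h1
        omega
      refine hadj.reachable.trans (ih X' Y hc' hX'E hYE hX'c hYc hX'U hYU ?_)
      intro S hSE hSc hint' hsub'
      refine hS S hSE hSc ?_ ?_
      · exact fun x hx => hint' (mem_inter.2 ⟨hint hx, (mem_inter.1 hx).2⟩)
      · exact hsub'.trans (union_subset hX'sub subset_union_right)

/-- Let `N = (E, ℬ)` be a matroid of rank `r`, `U` its set of dependent `r`-sets, and let
`C = {Y : J(r,E) reaches Y from X₀ within U}` be the vertex set of a connected component of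
the subgraph of the Johnson graph induced on `U`. Then `(E, C(E,r) \ C)` is again a matroid,
i.e. `C(E,r) \ C` satisfies the basis exchange axiom. -/
theorem component_removal_is_matroid {α : Type*} [DecidableEq α]
    (E : Finset α) (r : ℕ)
    (ℬ : Finset (Finset α)) (hBE : ∀ B ∈ ℬ, B ∈ E.powersetCard r) (hBne : ℬ.Nonempty)
    (hexch : ∀ B ∈ ℬ, ∀ B' ∈ ℬ, ∀ e ∈ B \ B', ∃ f ∈ B' \ B,
      insert f (B.erase e) ∈ ℬ ∧ insert e (B'.erase f) ∈ ℬ) :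
    let U : Set (Finset α) := {X | X ∈ E.powersetCard r ∧ X ∉ ℬ}
    let G : SimpleGraph (Finset α) :=
      SimpleGraph.fromRel (fun X Y => X ∈ U ∧ Y ∈ U ∧ (X \ Y).card = 1)
    ∀ X₀ ∈ U,
      let ℬ' : Set (Finset α) := {B | B ∈ E.powersetCard r ∧ ¬ G.Reachable X₀ B}
      ∀ B ∈ ℬ', ∀ B' ∈ ℬ', ∀ e ∈ B \ B', ∃ f ∈ B' \ B,
        insert f (B.erase e) ∈ ℬ' ∧ insert e (B'.erase f) ∈ ℬ' := by
  intro U G X₀ hX₀ ℬ' B hB B' hB' e he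
  -- basic unfoldings
  obtain ⟨hBP, hBr⟩ := hB
  obtain ⟨hB'P, hB'r⟩ := hB'
  obtain ⟨hBEsub, hBc⟩ := Finset.mem_powersetCard.1 hBP
  obtain ⟨hB'Esub, hB'c⟩ := Finset.mem_powersetCard.1 hB'P
  obtain ⟨heB, heB'⟩ := mem_sdiff.1 he
  -- adjacency from the relation
  have hGadj : ∀ X Y : Finset α, X ∈ U → Y ∈ U → (X \ Y).card = 1 → G.Adj X Y := by
    intro X Y hX hY hcard
    have hne : X ≠ Y := by
      intro h
      rw [h, sdiff_self] at hcard
      simp at hcard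
    exact (SimpleGraph.fromRel_adj _ X Y).2 ⟨hne, Or.inl ⟨hX, hY, hcard⟩⟩
  have hadjU : ∀ X Y : Finset α, G.Adj X Y → Y ∈ U := by
    intro X Y h
    rw [SimpleGraph.fromRel_adj] at h
    rcases h.2 with h' | h'
    · exact h'.2.1
    · exact h'.1
  have hreachU : ∀ Y : Finset α, G.Reachable X₀ Y → Y ∈ U := by
    intro Y hr
    exact hr.elim fun w => walk_prop (· ∈ U) hadjU w hX₀
  have hBsub : ∀ S ∈ ℬ, S ∈ ℬ' := by
    intro S hS
    exact ⟨hBE S hS, fun hr => (hreachU S hr).2 hS⟩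
  have hnbr : ∀ X Y : Finset α, X ∈ U → ¬ G.Reachable X₀ X → Y ∈ E.powersetCard r →
      (X \ Y).card = 1 → Y ∈ ℬ' := by
    intro X Y hXU hXr hYP hc
    by_cases hYB : Y ∈ ℬ
    · exact hBsub Y hYB
    · refine ⟨hYP, fun hr => hXr ?_⟩
      exact hr.trans (hGadj X Y hXU ⟨hYP, hYB⟩ hc).symm.reachable
  have hins : ∀ (X : Finset α) (a b : α), X ⊆ E → X.card = r → a ∈ X → b ∈ E → b ∉ X →
      insert b (X.erase a) ∈ E.powersetCard r := by
    intro X a b hXE hXc ha hbE hb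
    rw [Finset.mem_powersetCard]
    refine ⟨insert_subset hbE ((erase_subset _ _).trans hXE), ?_⟩
    rw [card_insert_of_notMem (fun h => hb (erase_subset _ _ h)), card_erase_of_mem ha]
    have : 0 < X.card := card_pos.2 ⟨a, ha⟩
    omega
  have hB'B : (B' \ B).Nonempty := by
    rw [Finset.sdiff_nonempty]
    intro hsub
    have : B' = B := Finset.eq_of_subset_of_card_le hsub (by omega)
    exact heB' (this ▸ heB)
  by_cases hBb : B ∈ ℬ <;> by_cases hB'b : B' ∈ ℬ
  · -- Case A : both bases
    obtain ⟨f, hf, h1, h2⟩ := hexch B hBb B' hB'b e he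
    exact ⟨f, hf, hBsub _ h1, hBsub _ h2⟩
  · -- Case D : B basis, B' dependent
    have hB'U : B' ∈ U := ⟨hB'P, hB'b⟩
    have key : ∃ f ∈ B' \ B, insert f (B.erase e) ∈ ℬ' := by
      by_contra hno
      push_neg at hno
      obtain ⟨f₀, hf₀⟩ := hB'B
      obtain ⟨hf₀B', hf₀B⟩ := mem_sdiff.1 hf₀
      set W := insert f₀ (B.erase e) with hWdef
      have hWP : W ∈ E.powersetCard r := hins B e f₀ hBEsub hBc heB (hB'Esub hf₀B') hf₀B
      obtain ⟨hWE, hWc⟩ := Finset.mem_powersetCard.1 hWP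
      have hWr : G.Reachable X₀ W := by
        by_contra hr
        exact hno f₀ hf₀ ⟨hWP, hr⟩
      have hWU : W ∈ U := hreachU W hWr
      have hnoB : ∀ g ∈ B' \ B, insert g (B.erase e) ∉ ℬ :=
        fun g hg hgB => hno g hg (hBsub _ hgB)
      have claim : ∀ S : Finset α, S ⊆ E → S.card = r → S ⊆ B' ∪ W → S ∉ ℬ := by
        intro S hSE hSc hSsub hSB
        have heS : e ∉ S := by
          intro hmem
          rcases mem_union.1 (hSsub hmem) with h | h
          · exact heB' h
          · rcases mem_insert.1 h with h | h
            · exact hf₀B (h ▸ heB)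
            · exact (mem_erase.1 h).1 rfl
        obtain ⟨g, hg, h1, _⟩ := hexch B hBb S hSB e (mem_sdiff.2 ⟨heB, heS⟩)
        obtain ⟨hgS, hgB⟩ := mem_sdiff.1 hg
        have hgB' : g ∈ B' := by
          rcases mem_union.1 (hSsub hgS) with h | h
          · exact h
          · rcases mem_insert.1 h with h | h
            · exact h ▸ hf₀B'
            · exact absurd (mem_erase.1 h).2 hgB
        exact hnoB g (mem_sdiff.2 ⟨hgB', hgB⟩) h1
      have hpath : G.Reachable B' W := by
        refine path_lemma hGadj (B' \ W).card B' W le_rfl hB'Esub hWE hB'c hWc hB'U hWU ?_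
        intro S hSE hSc _ hsub
        exact ⟨Finset.mem_powersetCard.2 ⟨hSE, hSc⟩, claim S hSE hSc hsub⟩
      exact hB'r (hWr.trans hpath.symm)
    obtain ⟨f, hf, hZ1⟩ := key
    obtain ⟨hfB', hfB⟩ := mem_sdiff.1 hf
    refine ⟨f, hf, hZ1, ?_⟩
    exact hnbr B' _ hB'U hB'r (hins B' f e hB'Esub hB'c hfB' (hBEsub heB) heB')
      (sdiff_insert_erase_card B' f e hfB' heB')
  · -- Case C : B dependent, B' basis
    have hBU : B ∈ U := ⟨hBP, hBb⟩
    have key : ∃ f ∈ B' \ B, insert e (B'.erase f) ∈ ℬ' := by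
      by_contra hno
      push_neg at hno
      obtain ⟨f₀, hf₀⟩ := hB'B
      obtain ⟨hf₀B', hf₀B⟩ := mem_sdiff.1 hf₀
      set Z := insert e (B'.erase f₀) with hZdef
      have hZP : Z ∈ E.powersetCard r := hins B' f₀ e hB'Esub hB'c hf₀B' (hBEsub heB) heB'
      obtain ⟨hZE, hZc⟩ := Finset.mem_powersetCard.1 hZP
      have hZr : G.Reachable X₀ Z := by
        by_contra hr
        exact hno f₀ hf₀ ⟨hZP, hr⟩
      have hZU : Z ∈ U := hreachU Z hZr
      have hnoB : ∀ g ∈ B' \ B, insert e (B'.erase g) ∉ ℬ :=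
        fun g hg hgB => hno g hg (hBsub _ hgB)
      have claim : ∀ S : Finset α, S ⊆ E → S.card = r → B ∩ Z ⊆ S → S ∉ ℬ := by
        intro S hSE hSc hint hSB
        have heS : e ∈ S := hint (mem_inter.2 ⟨heB, mem_insert_self e _⟩)
        obtain ⟨g, hg, _, h2⟩ := hexch S hSB B' hB'b e (mem_sdiff.2 ⟨heS, heB'⟩)
        obtain ⟨hgB', hgS⟩ := mem_sdiff.1 hg
        have hgB : g ∉ B := by
          intro hgB
          exact hgS (hint (mem_inter.2 ⟨hgB,
            mem_insert_of_mem (mem_erase.2 ⟨fun h => hf₀B (h ▸ hgB), hgB'⟩)⟩))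
        exact hnoB g (mem_sdiff.2 ⟨hgB', hgB⟩) h2
      have hpath : G.Reachable B Z := by
        refine path_lemma hGadj (B \ Z).card B Z le_rfl hBEsub hZE hBc hZc hBU hZU ?_
        intro S hSE hSc hint _
        exact ⟨Finset.mem_powersetCard.2 ⟨hSE, hSc⟩, claim S hSE hSc hint⟩
      exact hBr (hZr.trans hpath.symm)
    obtain ⟨f, hf, hZ2⟩ := key
    obtain ⟨hfB', hfB⟩ := mem_sdiff.1 hf
    refine ⟨f, hf, ?_, hZ2⟩
    exact hnbr B _ hBU hBr (hins B e f hBEsub hBc heB (hB'Esub hfB') hfB)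
      (sdiff_insert_erase_card B e f heB hfB)
  · -- Case B : both dependent
    have hBU : B ∈ U := ⟨hBP, hBb⟩
    have hB'U : B' ∈ U := ⟨hB'P, hB'b⟩
    obtain ⟨f₀, hf₀⟩ := hB'B
    obtain ⟨hf₀B', hf₀B⟩ := mem_sdiff.1 hf₀
    refine ⟨f₀, hf₀, ?_, ?_⟩
    · exact hnbr B _ hBU hBr (hins B e f₀ hBEsub hBc heB (hB'Esub hf₀B') hf₀B)
        (sdiff_insert_erase_card B e f₀ heB hf₀B)
    · exact hnbr B' _ hB'U hB'r (hins B' f₀ e hB'Esub hB'c hf₀B' (hBEsub heB) heB')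
        (sdiff_insert_erase_card B' f₀ e hf₀B' heB')
end

section
/- Let N be a matroid of rank r on E whose set of non-bases U spans k connected components C₁,...,C_k in the Johnson graph J(r,E). Then the valuations ν_{N₁}, ..., ν_{N_k} ∈ ℝ^{C(E,r)}, where N_i = (E, C(E,r)\C_i) and ν_{N_i}(X) = r − rank_{N_i}(X), are linearly independent, and ν_N = Σ_{i=1}^k ν_{N_i}. -/
def rkOf {α : Type*} [DecidableEq α] (ℬ : Finset (Finset α)) (X : Finset α) : ℕ :=
  ℬ.sup (fun B => (X ∩ B).card)

section Aux
variable {α : Type*} [DecidableEq α]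

lemma rkOf_le {r : ℕ} (ℬ' : Finset (Finset α)) {X : Finset α} (hX : X.card = r) :
    rkOf ℬ' X ≤ r :=
  Finset.sup_le fun _ _ => hX ▸ Finset.card_le_card Finset.inter_subset_left

lemma rkOf_eq_of_mem {r : ℕ} {ℬ' : Finset (Finset α)} {X : Finset α} (hX : X.card = r)
    (hm : X ∈ ℬ') : rkOf ℬ' X = r := by
  refine le_antisymm (rkOf_le ℬ' hX) ?_
  have := Finset.le_sup (f := fun B => (X ∩ B).card) hm
  simp only [Finset.inter_self, hX] at this
  exact this

lemma rkOf_lt_of_notMem {r : ℕ} {ℬ' : Finset (Finset α)} {X : Finset α} (hr : 0 < r)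
    (hX : X.card = r) (hall : ∀ B ∈ ℬ', B.card = r) (hm : X ∉ ℬ') :
    rkOf ℬ' X < r := by
  have h : rkOf ℬ' X ≤ r - 1 := by
    apply Finset.sup_le
    intro B hB
    have h1 : (X ∩ B).card ≤ r := hX ▸ Finset.card_le_card Finset.inter_subset_left
    rcases lt_or_eq_of_le h1 with h2 | h2
    · omega
    · exfalso
      have hXB : X ∩ B = X := Finset.eq_of_subset_of_card_le Finset.inter_subset_left (by omega)
      have hsub : X ⊆ B := by rw [← hXB]; exact Finset.inter_subset_right
      have : X = B := Finset.eq_of_subset_of_card_le hsub (by rw [hall B hB, hX])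
      exact hm (this ▸ hB)
  omega

lemma path_lemma_s13 (E : Finset α) (r : ℕ) (ℬ : Finset (Finset α)) :
    ∀ n (B X : Finset α), (X \ B).card = n →
    B ∈ E.powersetCard r → X ∈ E.powersetCard r → B ∉ ℬ → X ∉ ℬ →
    (SimpleGraph.fromRel (fun X Y : Finset α =>
        X ∈ E.powersetCard r \ ℬ ∧ Y ∈ E.powersetCard r \ ℬ ∧ (X \ Y).card = 1)).Reachable B X ∨
    ∃ B' ∈ ℬ, (X ∩ B).card ≤ (X ∩ B').card := by
  intro n
  induction n using Nat.strong_induction_on with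
  | _ n ih =>
    intro B X hn hBS hXS hBℬ hXℬ
    rw [Finset.mem_powersetCard] at hBS hXS
    obtain ⟨hBE, hBc⟩ := hBS
    obtain ⟨hXE, hXc⟩ := hXS
    rcases Nat.eq_zero_or_pos n with h0 | hpos
    · subst h0
      have : X = B := Finset.eq_of_subset_of_card_le
        ((Finset.sdiff_eq_empty_iff_subset).1 (Finset.card_eq_zero.1 hn)) (by omega)
      subst this
      exact Or.inl (SimpleGraph.Reachable.refl _)
    · obtain ⟨x, hx⟩ : (X \ B).Nonempty := Finset.card_pos.1 (hn ▸ hpos)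
      have hBX : (B \ X).card = n := by
        rw [Finset.card_sdiff_comm (by omega)]; exact hn
      obtain ⟨b, hb⟩ : (B \ X).Nonempty := Finset.card_pos.1 (hBX ▸ hpos)
      rw [Finset.mem_sdiff] at hx hb
      obtain ⟨hxX, hxB⟩ := hx
      obtain ⟨hbB, hbX⟩ := hb
      set B₁ : Finset α := insert x (B.erase b) with hB₁def
      have hxb : x ≠ b := fun h => hbX (h ▸ hxX)
      have hB₁c : B₁.card = r := by
        rw [hB₁def, Finset.card_insert_of_notMem (fun h => hxB (Finset.erase_subset _ _ h)),
          Finset.card_erase_of_mem hbB]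
        have : 0 < B.card := Finset.card_pos.2 ⟨b, hbB⟩
        omega
      have hB₁E : B₁ ⊆ E := by
        rw [hB₁def]
        exact Finset.insert_subset (hXE hxX) ((Finset.erase_subset _ _).trans hBE)
      have hB₁S : B₁ ∈ E.powersetCard r := Finset.mem_powersetCard.2 ⟨hB₁E, hB₁c⟩
      have hsub : X ∩ B ⊆ X ∩ B₁ := by
        intro y hy
        rw [Finset.mem_inter] at hy ⊢
        refine ⟨hy.1, ?_⟩
        rw [hB₁def, Finset.mem_insert, Finset.mem_erase]
        exact Or.inr ⟨fun h => hbX (h ▸ hy.1), hy.2⟩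
      have hdiffsub : X \ B₁ ⊆ (X \ B).erase x := by
        intro y hy
        rw [Finset.mem_sdiff] at hy
        rw [Finset.mem_erase, Finset.mem_sdiff]
        have hy2 := hy.2
        rw [hB₁def, Finset.mem_insert, Finset.mem_erase] at hy2
        push_neg at hy2
        refine ⟨hy2.1, hy.1, fun hyB => ?_⟩
        have : y ≠ b := fun h => hbX (h ▸ hy.1)
        exact (hy2.2 this hyB)
      have hlt : (X \ B₁).card < n := by
        calc (X \ B₁).card ≤ ((X \ B).erase x).card := Finset.card_le_card hdiffsub
        _ = n - 1 := by rw [Finset.card_erase_of_mem (Finset.mem_sdiff.2 ⟨hxX, hxB⟩), hn]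
        _ < n := by omega
      by_cases hB₁ℬ : B₁ ∈ ℬ
      · exact Or.inr ⟨B₁, hB₁ℬ, Finset.card_le_card hsub⟩
      · have hadj : (SimpleGraph.fromRel (fun X Y : Finset α =>
            X ∈ E.powersetCard r \ ℬ ∧ Y ∈ E.powersetCard r \ ℬ ∧ (X \ Y).card = 1)).Adj B B₁ := by
          rw [SimpleGraph.fromRel_adj]
          refine ⟨fun h => hxB (h ▸ Finset.mem_insert_self x _), Or.inl ?_⟩
          refine ⟨Finset.mem_sdiff.2 ⟨Finset.mem_powersetCard.2 ⟨hBE, hBc⟩, hBℬ⟩,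
            Finset.mem_sdiff.2 ⟨hB₁S, hB₁ℬ⟩, ?_⟩
          have : B \ B₁ = {b} := by
            ext y
            rw [Finset.mem_sdiff, hB₁def, Finset.mem_insert, Finset.mem_erase,
              Finset.mem_singleton]
            constructor
            · rintro ⟨hyB, hy⟩
              push_neg at hy
              by_contra hyb
              exact hy.2 hyb hyB
            · rintro rfl
              push_neg
              exact ⟨hbB, fun h => hxb h.symm, fun h _ => h rfl⟩
          rw [this, Finset.card_singleton]
        rcases ih _ hlt B₁ X rfl hB₁S (Finset.mem_powersetCard.2 ⟨hXE, hXc⟩) hB₁ℬ hXℬ with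
          hreach | ⟨B', hB', hle⟩
        · exact Or.inl (hadj.reachable.trans hreach)
        · exact Or.inr ⟨B', hB', (Finset.card_le_card hsub).trans hle⟩

end Aux

/-- Let `N = (E, ℬ)` be a matroid of rank `r` whose set of non-bases has connected
components `C 1, ..., C k` in the Johnson graph `J(r,E)`, and let `N_i` be the matroid with
bases `C(E,r) \ C i`. Then the valuations `ν_{N_i}(X) = r − rank_{N_i}(X)` are linearly
independent in `ℝ^{C(E,r)}`, and `ν_N = Σ_i ν_{N_i}`. -/
theorem component_valuations_linearIndependent {α : Type*} [DecidableEq α]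
    (E : Finset α) (r k : ℕ) (hk : 0 < k)
    (ℬ : Finset (Finset α)) (hBE : ∀ B ∈ ℬ, B ∈ E.powersetCard r) (hBne : ℬ.Nonempty)
    (hexch : ∀ B ∈ ℬ, ∀ B' ∈ ℬ, ∀ e ∈ B \ B', ∃ f ∈ B' \ B,
      insert f (B.erase e) ∈ ℬ ∧ insert e (B'.erase f) ∈ ℬ)
    (C : Fin k → Finset (Finset α))
    (hcomp : ∀ i : Fin k, ∃ X₀ ∈ E.powersetCard r \ ℬ, ∀ Y : Finset α,
      Y ∈ C i ↔ (SimpleGraph.fromRel (fun X Y : Finset α =>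
        X ∈ E.powersetCard r \ ℬ ∧ Y ∈ E.powersetCard r \ ℬ ∧ (X \ Y).card = 1)).Reachable X₀ Y)
    (hdistinct : ∀ i j : Fin k, i ≠ j → C i ≠ C j)
    (hcover : (Finset.univ : Finset (Fin k)).biUnion C = E.powersetCard r \ ℬ) :
    LinearIndependent ℝ (fun i : Fin k =>
      (fun X : {X : Finset α // X ∈ E.powersetCard r} =>
        (r : ℝ) - rkOf (E.powersetCard r \ C i) X.1)) ∧
    ∀ X : {X : Finset α // X ∈ E.powersetCard r},
      (r : ℝ) - rkOf ℬ X.1 = ∑ i : Fin k, ((r : ℝ) - rkOf (E.powersetCard r \ C i) X.1) := by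
  classical
  set G := SimpleGraph.fromRel (fun X Y : Finset α =>
      X ∈ E.powersetCard r \ ℬ ∧ Y ∈ E.powersetCard r \ ℬ ∧ (X \ Y).card = 1) with hGdef
  choose X₀ hX₀U hX₀iff using hcomp
  have hX₀C : ∀ i, X₀ i ∈ C i := fun i => (hX₀iff i _).2 (SimpleGraph.Reachable.refl _)
  -- r is positive
  have hr : 0 < r := by
    rcases Nat.eq_zero_or_pos r with h0 | h
    · exfalso
      subst h0
      have h1 := hX₀U ⟨0, hk⟩
      rw [Finset.mem_sdiff, Finset.powersetCard_zero, Finset.mem_singleton] at h1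
      obtain ⟨B₀, hB₀⟩ := hBne
      have h2 := hBE B₀ hB₀
      rw [Finset.powersetCard_zero, Finset.mem_singleton] at h2
      rw [h2, ← h1.1] at hB₀
      exact h1.2 hB₀
    · exact h
  have adj_mem : ∀ {a b : Finset α}, G.Adj a b → b ∈ E.powersetCard r \ ℬ := by
    intro a b hab
    rw [hGdef, SimpleGraph.fromRel_adj] at hab
    rcases hab.2 with h | h
    · exact h.2.1
    · exact h.1
  have key : ∀ (a b : Finset α) (_ : G.Walk a b), a ∈ E.powersetCard r \ ℬ →
      b ∈ E.powersetCard r \ ℬ := by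
    intro a b w
    induction w with
    | nil => exact id
    | cons h _ ih => exact fun _ => ih (adj_mem h)
  have hCU : ∀ i, ∀ Y ∈ C i, Y ∈ E.powersetCard r \ ℬ := by
    intro i Y hY
    obtain ⟨w⟩ := (hX₀iff i Y).1 hY
    exact key _ _ w (hX₀U i)
  have hCclosed : ∀ i (Y Z : Finset α), Y ∈ C i → G.Reachable Y Z → Z ∈ C i := by
    intro i Y Z hY hYZ
    exact (hX₀iff i Z).2 (((hX₀iff i Y).1 hY).trans hYZ)
  have hdisj : ∀ i j : Fin k, i ≠ j → ∀ Y, Y ∈ C i → Y ∉ C j := by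
    intro i j hij Y hYi hYj
    apply hdistinct i j hij
    ext Z
    have h1 := (hX₀iff i Y).1 hYi
    have h2 := (hX₀iff j Y).1 hYj
    rw [hX₀iff i Z, hX₀iff j Z]
    constructor
    · exact fun h => h2.trans (h1.symm.trans h)
    · exact fun h => h1.trans (h2.symm.trans h)
  have hall : ∀ i : Fin k, ∀ B ∈ E.powersetCard r \ C i, B.card = r := by
    intro i B hB
    rw [Finset.mem_sdiff, Finset.mem_powersetCard] at hB
    exact hB.1.2
  -- the central rank equality
  have hrkeq : ∀ (j : Fin k) (X : Finset α), X ∈ C j →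
      rkOf ℬ X = rkOf (E.powersetCard r \ C j) X := by
    intro j X hXC
    have hXU := hCU j X hXC
    rw [Finset.mem_sdiff] at hXU
    apply le_antisymm
    · apply Finset.sup_le
      intro B hB
      have hBm : B ∈ E.powersetCard r \ C j := by
        rw [Finset.mem_sdiff]
        refine ⟨hBE B hB, fun hBC => ?_⟩
        have := hCU j B hBC
        rw [Finset.mem_sdiff] at this
        exact this.2 hB
      exact Finset.le_sup (f := fun B => (X ∩ B).card) hBm
    · apply Finset.sup_le
      intro B hB
      rw [Finset.mem_sdiff] at hB
      by_cases hBℬ : B ∈ ℬ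
      · exact Finset.le_sup (f := fun B => (X ∩ B).card) hBℬ
      · rcases path_lemma_s13 E r ℬ (X \ B).card B X rfl hB.1 hXU.1 hBℬ hXU.2 with
          hreach | ⟨B', hB', hle⟩
        · exact absurd (hCclosed j X B hXC hreach.symm) hB.2
        · exact hle.trans (Finset.le_sup (f := fun B => (X ∩ B).card) hB')
  constructor
  · rw [Fintype.linearIndependent_iff]
    intro g hg i
    have hX₀S : X₀ i ∈ E.powersetCard r := by
      have := hX₀U i; rw [Finset.mem_sdiff] at this; exact this.1
    have hgx := congrFun hg ⟨X₀ i, hX₀S⟩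
    simp only [Finset.sum_apply, Pi.smul_apply, smul_eq_mul, Pi.zero_apply] at hgx
    rw [Finset.sum_eq_single i] at hgx
    · have hpos : rkOf (E.powersetCard r \ C i) (X₀ i) < r :=
        rkOf_lt_of_notMem hr ((Finset.mem_powersetCard.1 hX₀S).2) (hall i)
          (by rw [Finset.mem_sdiff]; exact fun h => h.2 (hX₀C i))
      have hcast : (rkOf (E.powersetCard r \ C i) (X₀ i) : ℝ) < r := by exact_mod_cast hpos
      rcases mul_eq_zero.1 hgx with h | h
      · exact h
      · rw [sub_eq_zero] at h
        exact absurd h.symm (ne_of_lt hcast)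
    · intro j _ hji
      have : X₀ i ∈ E.powersetCard r \ C j :=
        Finset.mem_sdiff.2 ⟨hX₀S, hdisj i j (fun h => hji h.symm) (X₀ i) (hX₀C i)⟩
      rw [rkOf_eq_of_mem ((Finset.mem_powersetCard.1 hX₀S).2) this]
      ring
    · exact fun h => absurd (Finset.mem_univ i) h
  · rintro ⟨X, hXS⟩
    have hXc : X.card = r := (Finset.mem_powersetCard.1 hXS).2
    by_cases hXℬ : X ∈ ℬ
    · rw [rkOf_eq_of_mem hXc hXℬ]
      have : ∀ i : Fin k, rkOf (E.powersetCard r \ C i) X = r := by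
        intro i
        apply rkOf_eq_of_mem hXc
        rw [Finset.mem_sdiff]
        refine ⟨hXS, fun hXC => ?_⟩
        have := hCU i X hXC
        rw [Finset.mem_sdiff] at this
        exact this.2 hXℬ
      simp [this]
    · have hXU : X ∈ E.powersetCard r \ ℬ := Finset.mem_sdiff.2 ⟨hXS, hXℬ⟩
      rw [← hcover, Finset.mem_biUnion] at hXU
      obtain ⟨j, _, hXC⟩ := hXU
      rw [Finset.sum_eq_single j]
      · rw [hrkeq j X hXC]
      · intro i _ hij
        rw [rkOf_eq_of_mem hXc (Finset.mem_sdiff.2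
          ⟨hXS, fun h => hdisj j i (fun e => hij e.symm) X hXC h⟩)]
        ring
      · exact fun h => absurd (Finset.mem_univ j) h
end

section
/- Let N be a matroid of rank r on E that is sparse paving, i.e., every non-basis r-set is a circuit-hyperplane, equivalently the set of non-bases is a stable (independent) set in the Johnson graph J(r,E). Then for each circuit-hyperplane X of N (each non-basis r-set), the function ν_X : C(E,r) → ℝ with ν_X(X) = 1 and ν_X(Y) = 0 for Y ≠ X is a valuation of U(r,E). -/
open Finset

/-- Let `N = (E, ℬ)` be a sparse paving matroid of rank `r`: its set of non-basis `r`-sets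
is a stable set of the Johnson graph `J(r,E)`. Then for each non-basis `r`-set `X`, the
indicator function `ν_X` (with `ν_X(X) = 1` and `ν_X(Y) = 0` otherwise) is a valuation of
the uniform matroid `U(r,E)`. -/
theorem sparse_paving_indicator_valuation {α : Type*} [DecidableEq α]
    (E : Finset α) (r : ℕ)
    (ℬ : Finset (Finset α)) (hBE : ∀ B ∈ ℬ, B ∈ E.powersetCard r) (hBne : ℬ.Nonempty)
    (hexch : ∀ B ∈ ℬ, ∀ B' ∈ ℬ, ∀ e ∈ B \ B', ∃ f ∈ B' \ B,
      insert f (B.erase e) ∈ ℬ ∧ insert e (B'.erase f) ∈ ℬ)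
    (hstable : ∀ Y ∈ E.powersetCard r, ∀ Z ∈ E.powersetCard r,
      Y ∉ ℬ → Z ∉ ℬ → Y ≠ Z → (Y \ Z).card ≠ 1)
    (X : Finset α) (hX : X ∈ E.powersetCard r) (hXnb : X ∉ ℬ) :
    ∀ B ∈ E.powersetCard r, ∀ B' ∈ E.powersetCard r, ∀ e ∈ B \ B', ∃ f ∈ B' \ B,
      (if insert f (B.erase e) = X then (1 : ℝ) else 0)
        + (if insert e (B'.erase f) = X then (1 : ℝ) else 0)
      ≤ (if B = X then (1 : ℝ) else 0) + (if B' = X then (1 : ℝ) else 0) := by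
  intro B hB B' hB' e he
  obtain ⟨heB, heB'⟩ := Finset.mem_sdiff.mp he
  have hBcard : B.card = r := (Finset.mem_powersetCard.mp hB).2
  have hB'card : B'.card = r := (Finset.mem_powersetCard.mp hB').2
  have hXcard : X.card = r := (Finset.mem_powersetCard.mp hX).2
  have hBB' : B ≠ B' := fun h => heB' (h ▸ heB)
  have hsd : (B' \ B).Nonempty := by
    rw [← Finset.card_pos, Finset.card_sdiff_comm (hB'card.trans hBcard.symm)]
    exact Finset.card_pos.mpr ⟨e, he⟩
  -- the two exchanged sets are always distinct
  have hdiff : ∀ f ∈ B' \ B, insert f (B.erase e) ≠ insert e (B'.erase f) := by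
    intro f hf h
    obtain ⟨hfB', hfB⟩ := Finset.mem_sdiff.mp hf
    have hef : e ≠ f := fun h' => heB' (h' ▸ hfB')
    have he1 : e ∉ insert f (B.erase e) := by
      simp [hef, Finset.mem_erase]
    exact he1 (h ▸ Finset.mem_insert_self e (B'.erase f))
  by_cases hBX : B = X
  · -- RHS ≥ 1, LHS ≤ 1
    obtain ⟨f, hf⟩ := hsd
    refine ⟨f, hf, ?_⟩
    have := hdiff f hf
    split_ifs with h1 h2 h3 h4 <;> simp_all <;> norm_num
  by_cases hB'X : B' = X
  · obtain ⟨f, hf⟩ := hsd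
    refine ⟨f, hf, ?_⟩
    have := hdiff f hf
    split_ifs with h1 h2 h3 h4 <;> simp_all <;> norm_num
  -- now RHS = 0
  by_cases hBm : B ∈ ℬ
  · by_cases hB'm : B' ∈ ℬ
    · obtain ⟨f, hf, hf1, hf2⟩ := hexch B hBm B' hB'm e he
      refine ⟨f, hf, ?_⟩
      have h1 : insert f (B.erase e) ≠ X := fun h => hXnb (h ▸ hf1)
      have h2 : insert e (B'.erase f) ≠ X := fun h => hXnb (h ▸ hf2)
      simp [h1, h2, hBX, hB'X]
    · -- B ∈ ℬ, B' ∉ ℬ : second exchanged set never equals X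
      have hA2 : ∀ f, insert e (B'.erase f) ≠ X := by
        intro f h
        have hsub : X \ B' ⊆ {e} := by
          intro x hx
          obtain ⟨hxX, hxB'⟩ := Finset.mem_sdiff.mp hx
          rw [← h] at hxX
          rcases Finset.mem_insert.mp hxX with h' | h'
          · simpa using h'
          · exact absurd (Finset.mem_of_mem_erase h') hxB'
        have hle := Finset.card_le_card hsub
        simp only [Finset.card_singleton] at hle
        have hne0 : (X \ B').card ≠ 0 := by
          intro h0
          exact hB'X (Finset.eq_of_subset_of_card_le
            (Finset.sdiff_eq_empty_iff_subset.mp (Finset.card_eq_zero.mp h0))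
            (hB'card.trans hXcard.symm).le).symm
        exact hstable X hX B' hB' hXnb hB'm (fun h' => hB'X h'.symm) (by omega)
      by_cases hgood : ∃ f ∈ B' \ B, insert f (B.erase e) ≠ X
      · obtain ⟨f, hf, h1⟩ := hgood
        refine ⟨f, hf, ?_⟩
        simp [h1, hA2 f, hBX, hB'X]
      · push_neg at hgood
        exfalso
        obtain ⟨f, hf⟩ := hsd
        have h1 := hgood f hf
        obtain ⟨hfB', hfB⟩ := Finset.mem_sdiff.mp hf
        have huniq : ∀ f' ∈ B' \ B, f' = f := by
          intro f' hf'
          by_contra hne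
          obtain ⟨hf'B', hf'B⟩ := Finset.mem_sdiff.mp hf'
          have h2 := hgood f' hf'
          -- f' ∈ X via h2? f' ∈ insert f' (B.erase e) = X
          have hf'X : f' ∈ X := h2 ▸ Finset.mem_insert_self f' _
          rw [← h1] at hf'X
          rcases Finset.mem_insert.mp hf'X with h' | h'
          · exact hne h'
          · exact hf'B (Finset.mem_of_mem_erase h')
        have hBsB' : B \ B' = {e} := by
          have hc1 : (B' \ B).card = 1 := by
            rw [Finset.eq_singleton_iff_unique_mem.mpr ⟨hf, huniq⟩]
            simp
          have hc2 : (B \ B').card = 1 := by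
            rw [Finset.card_sdiff_comm (hBcard.trans hB'card.symm)]
            exact hc1
          obtain ⟨a, ha⟩ := Finset.card_eq_one.mp hc2
          rw [ha]
          rw [ha] at he
          simp only [Finset.mem_singleton] at he
          rw [he]
        -- X = insert f (B.erase e) = B'
        apply hB'X
        rw [← h1]
        symm
        ext x
        simp only [Finset.mem_insert, Finset.mem_erase]
        constructor
        · rintro (rfl | ⟨hxe, hxB⟩)
          · exact hfB'
          · by_contra hxB'
            have : x ∈ B \ B' := Finset.mem_sdiff.mpr ⟨hxB, hxB'⟩
            rw [hBsB'] at this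
            exact hxe (Finset.mem_singleton.mp this)
        · intro hxB'
          by_cases hxf : x = f
          · exact Or.inl hxf
          · right
            have hxB : x ∈ B := by
              by_contra hxB
              exact hxf (huniq x (Finset.mem_sdiff.mpr ⟨hxB', hxB⟩))
            exact ⟨fun h' => heB' (h' ▸ hxB'), hxB⟩
  · -- B ∉ ℬ : first exchanged set never equals X
    have hB2 : 2 ≤ (B \ X).card := by
      have hne0 : (B \ X).card ≠ 0 := by
        intro h0
        exact hBX (Finset.eq_of_subset_of_card_le
          (Finset.sdiff_eq_empty_iff_subset.mp (Finset.card_eq_zero.mp h0))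
          (hXcard.trans hBcard.symm).le)
      have hne1 := hstable B hB X hX hBm hXnb hBX
      omega
    have hA1 : ∀ f, insert f (B.erase e) ≠ X := by
      intro f h
      have hsub : B \ X ⊆ {e} := by
        intro x hx
        obtain ⟨hxB, hxX⟩ := Finset.mem_sdiff.mp hx
        by_contra hxe
        simp only [Finset.mem_singleton] at hxe
        have hx1 : x ∈ B.erase e := Finset.mem_erase.mpr ⟨hxe, hxB⟩
        have : x ∈ X := h ▸ Finset.mem_insert_of_mem hx1
        exact hxX this
      have hle := Finset.card_le_card hsub
      simp only [Finset.card_singleton] at hle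
      omega
    by_cases hB'm : B' ∈ ℬ
    · by_cases hgood : ∃ f ∈ B' \ B, insert e (B'.erase f) ≠ X
      · obtain ⟨f, hf, h2⟩ := hgood
        refine ⟨f, hf, ?_⟩
        simp [hA1 f, h2, hBX, hB'X]
      · push_neg at hgood
        exfalso
        obtain ⟨f, hf⟩ := hsd
        have h1 := hgood f hf
        obtain ⟨hfB', hfB⟩ := Finset.mem_sdiff.mp hf
        have huniq : ∀ f' ∈ B' \ B, f' = f := by
          intro f' hf'
          by_contra hne
          obtain ⟨hf'B', hf'B⟩ := Finset.mem_sdiff.mp hf'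
          have h2 := hgood f' hf'
          -- f' ∈ X via h1 (since f' ∈ B'.erase f), but f' ∉ insert e (B'.erase f') = X
          have hef' : e ≠ f' := fun h' => heB' (h' ▸ hf'B')
          have hf'X : f' ∈ X :=
            h1 ▸ Finset.mem_insert_of_mem (Finset.mem_erase.mpr ⟨hne, hf'B'⟩)
          rw [← h2] at hf'X
          rcases Finset.mem_insert.mp hf'X with h' | h'
          · exact hef' h'.symm
          · exact (Finset.notMem_erase f' B') h'
        have hBsB' : B \ B' = {e} := by
          have hc1 : (B' \ B).card = 1 := by
            rw [Finset.eq_singleton_iff_unique_mem.mpr ⟨hf, huniq⟩]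
            simp
          have hc2 : (B \ B').card = 1 := by
            rw [Finset.card_sdiff_comm (hBcard.trans hB'card.symm)]
            exact hc1
          obtain ⟨a, ha⟩ := Finset.card_eq_one.mp hc2
          rw [ha]
          rw [ha] at he
          simp only [Finset.mem_singleton] at he
          rw [he]
        -- X = insert e (B'.erase f) = B
        apply hBX
        rw [← h1]
        ext x
        simp only [Finset.mem_insert, Finset.mem_erase]
        constructor
        · intro hxB
          by_cases hxe : x = e
          · exact Or.inl hxe
          · right
            have hxB' : x ∈ B' := by
              by_contra hxB'
              have : x ∈ B \ B' := Finset.mem_sdiff.mpr ⟨hxB, hxB'⟩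
              rw [hBsB'] at this
              exact hxe (Finset.mem_singleton.mp this)
            exact ⟨fun h' => hfB (h' ▸ hxB), hxB'⟩
        · rintro (rfl | ⟨hxf, hxB'⟩)
          · exact heB
          · by_contra hxB
            exact hxf (huniq x (Finset.mem_sdiff.mpr ⟨hxB', hxB⟩))
    · -- B ∉ ℬ, B' ∉ ℬ
      have hA2 : ∀ f, insert e (B'.erase f) ≠ X := by
        intro f h
        have hsub : X \ B' ⊆ {e} := by
          intro x hx
          obtain ⟨hxX, hxB'⟩ := Finset.mem_sdiff.mp hx
          rw [← h] at hxX
          rcases Finset.mem_insert.mp hxX with h' | h'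
          · simpa using h'
          · exact absurd (Finset.mem_of_mem_erase h') hxB'
        have hle := Finset.card_le_card hsub
        simp only [Finset.card_singleton] at hle
        have hne0 : (X \ B').card ≠ 0 := by
          intro h0
          exact hB'X (Finset.eq_of_subset_of_card_le
            (Finset.sdiff_eq_empty_iff_subset.mp (Finset.card_eq_zero.mp h0))
            (hB'card.trans hXcard.symm).le).symm
        exact hstable X hX B' hB' hXnb hB'm (fun h' => hB'X h'.symm) (by omega)
      obtain ⟨f, hf⟩ := hsd
      refine ⟨f, hf, ?_⟩
      simp [hA1 f, hA2 f, hBX, hB'X]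
end

section
/- Let f : 2^X → ℝ be a polymatroid function on a finite set X (normalized: f(∅) = 0, monotone, and submodular), and let A be an exact k-cover of X. Then f(X) ≤ (1/k) Σ_{A ∈ A} f(A). -/
/-!
Rank the points of `X` injectively and let `g a` be the increment of `f` when `a` is added to
the set of points ranked below `a`. These increments telescope to `f X`, and submodularity makes
them decrease as the base set grows, so `∑_{a ∈ A} g a ≤ f A` for every `A`. Summing over an
exact `k`-cover counts every `g a` exactly `k` times:
`k f X = ∑_{A ∈ 𝒜} ∑_{a ∈ A} g a ≤ ∑_{A ∈ 𝒜} f A`.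
-/

open Finset Function

theorem Multiset.sum_map_sum_eq_sum_countP_nsmul {X M : Type*} [Fintype X] [DecidableEq X]
    [AddCommMonoid M] (S : Multiset (Finset X)) (g : X → M) :
    (S.map fun A => ∑ x ∈ A, g x).sum = ∑ x, S.countP (x ∈ ·) • g x := by
  induction S using Multiset.induction_on with
  | empty => simp
  | cons A S ih =>
    simp only [map_cons, sum_cons, ih, countP_cons, add_smul, Finset.sum_add_distrib, ite_smul,
      one_smul, zero_smul, Finset.sum_ite_mem, univ_inter]
    exact add_comm _ _

theorem lt_of_forall_le_of_notMem {X α : Type*} [LinearOrder α] {e : X → α}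
    (he : Injective e) {a : X} {s : Finset X} (has : a ∉ s)
    (hmax : ∀ x ∈ s, e x ≤ e a) : ∀ x ∈ s, e x < e a :=
  fun x hx => (hmax x hx).lt_of_ne (he.ne (ne_of_mem_of_not_mem hx has))

section Marginal

variable {X α β : Type*} [Fintype X] [LinearOrder α] [AddCommGroup β]
  {e : X → α} {f : Finset X → β}

variable (e) in
def rankedBelow (a : X) : Finset X := {x | e x < e a}

@[simp]
theorem mem_rankedBelow {a x : X} : x ∈ rankedBelow e a ↔ e x < e a := by
  simp [rankedBelow]

variable [DecidableEq X]

variable (e f) in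
def marginal (a : X) : β := f (insert a (rankedBelow e a)) - f (rankedBelow e a)

theorem marginal_le_of_forall_lt [PartialOrder β] [IsOrderedAddMonoid β]
    (hsub : ∀ A B : Finset X, f (A ∪ B) + f (A ∩ B) ≤ f A + f B) {a : X} {s : Finset X}
    (hs : ∀ x ∈ s, e x < e a) : marginal e f a ≤ f (insert a s) - f s := by
  have hsP : s ⊆ rankedBelow e a := fun x hx => mem_rankedBelow.mpr (hs x hx)
  have haP : a ∉ rankedBelow e a := by simp
  have := hsub (insert a s) (rankedBelow e a)
  rw [insert_union, union_eq_right.mpr hsP, insert_inter_of_notMem haP,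
    inter_eq_left.mpr hsP] at this
  exact sub_le_sub_iff.mpr this

theorem sum_marginal_le [PartialOrder β] [IsOrderedAddMonoid β] (he : Injective e)
    (h0 : f ∅ = 0) (hsub : ∀ A B : Finset X, f (A ∪ B) + f (A ∩ B) ≤ f A + f B)
    (A : Finset X) : ∑ x ∈ A, marginal e f x ≤ f A := by
  induction A using Finset.induction_on_max_value e with
  | empty => simp [h0]
  | insert a s has hmax ih =>
    rw [sum_insert has]
    calc marginal e f a + ∑ x ∈ s, marginal e f x ≤ (f (insert a s) - f s) + f s :=
          add_le_add (marginal_le_of_forall_lt hsub (lt_of_forall_le_of_notMem he has hmax)) ih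
      _ = f (insert a s) := sub_add_cancel _ _

theorem sum_marginal_of_forall_lt_mem (he : Injective e) (h0 : f ∅ = 0) {A : Finset X}
    (hA : ∀ x ∈ A, ∀ y, e y < e x → y ∈ A) : ∑ x ∈ A, marginal e f x = f A := by
  induction A using Finset.induction_on_max_value e with
  | empty => simp [h0]
  | insert a s has hmax ih =>
    have hlt := lt_of_forall_le_of_notMem he has hmax
    have hs : s = rankedBelow e a := by
      ext x
      rw [mem_rankedBelow]
      exact ⟨hlt x, fun hx => (mem_insert.mp (hA a (mem_insert_self a s) x hx)).resolve_left
        (ne_of_apply_ne e hx.ne)⟩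
    have hs_closed : ∀ x ∈ s, ∀ y, e y < e x → y ∈ s := fun x hx y hy =>
      (mem_insert.mp (hA x (mem_insert_of_mem hx) y hy)).resolve_left
        (ne_of_apply_ne e (hy.trans (hlt x hx)).ne)
    rw [sum_insert has, ih hs_closed, marginal, ← hs, sub_add_cancel]

end Marginal

theorem polymatroid_shearer_general {X : Type*} [Fintype X] [DecidableEq X]
    (f : Finset X → ℝ) (h0 : f ∅ = 0)
    (hsub : ∀ A B : Finset X, f (A ∪ B) + f (A ∩ B) ≤ f A + f B)
    (k : ℕ) (𝒜 : Multiset (Finset X))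
    (hcov : ∀ x : X, 𝒜.countP (fun A => x ∈ A) = k) :
    (k : ℝ) * f Finset.univ ≤ (𝒜.map f).sum := by
  have he : Injective (Fintype.equivFin X) := (Fintype.equivFin X).injective
  calc (k : ℝ) * f univ = ∑ x, k • marginal (Fintype.equivFin X) f x := by
        rw [← sum_marginal_of_forall_lt_mem he h0 (A := univ) (by simp), ← nsmul_eq_mul,
          Finset.smul_sum]
    _ = (𝒜.map fun A => ∑ x ∈ A, marginal (Fintype.equivFin X) f x).sum := by
        simp only [Multiset.sum_map_sum_eq_sum_countP_nsmul, hcov]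
    _ ≤ (𝒜.map f).sum :=
        Multiset.sum_map_le_sum_map _ _ fun A _ => sum_marginal_le he h0 hsub A

/-- Shearer's lemma for polymatroids: if `f : 2^X → ℝ` is normalized, monotone and
submodular, and `𝒜` is an exact `k`-cover of `X`, then `f(X) ≤ (1/k) Σ_{A ∈ 𝒜} f(A)`,
stated multiplied through by `k`. -/
theorem polymatroid_shearer {X : Type*} [Fintype X] [DecidableEq X]
    (f : Finset X → ℝ) (h0 : f ∅ = 0)
    (hmono : ∀ A B : Finset X, A ⊆ B → f A ≤ f B)
    (hsub : ∀ A B : Finset X, f (A ∪ B) + f (A ∩ B) ≤ f A + f B)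
    (k : ℕ) (𝒜 : Multiset (Finset X))
    (hcov : ∀ x : X, 𝒜.countP (fun A => x ∈ A) = k) :
    (k : ℝ) * f Finset.univ ≤ (𝒜.map f).sum :=
  polymatroid_shearer_general f h0 hsub k 𝒜 hcov
end
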